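/- arXiv:1902.02379 — 7 statements merged into one kernel-verified Lean document; each statement's English description precedes it below -/
import Mathlib

section
/- Let H be a Hilbert space, let D ⊆ H be a convex set, let T : D → H' be a map into a Hilbert space H' satisfying ‖T((1−t)a₁ + t a₂)‖ ≤ (1−t)‖T a₁‖ + t‖T a₂‖ for all a₁, a₂ ∈ D and t ∈ [0,1], and fix v ∈ H. Define for R > 0, f(R) = inf { ‖a − v‖ : a ∈ D, ‖T a‖ ≤ R }. Then f is convex on (0, ∞) (where we allow f(R) = +∞ if the set is empty). -/
open scoped ENNReal

/- Abstract form of the convexity of `R ↦ Σ*_R(X:B)`: for a convex domain `D` and map `T`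
satisfying the norm-convexity estimate, the function
`f(R) = inf { ‖a − v‖ : a ∈ D, ‖T a‖ ≤ R }` (valued in `[0,∞]`, `∞` if the set is empty)
is convex on `(0,∞)`. -/
theorem stmt_2 {H H' : Type*} [NormedAddCommGroup H] [InnerProductSpace ℝ H]
    [NormedAddCommGroup H'] [InnerProductSpace ℝ H']
    (D : Set H) (hD : Convex ℝ D) (T : H → H') (v : H)
    (hT : ∀ a₁ ∈ D, ∀ a₂ ∈ D, ∀ t : ℝ, 0 ≤ t → t ≤ 1 →
      ‖T ((1 - t) • a₁ + t • a₂)‖ ≤ (1 - t) * ‖T a₁‖ + t * ‖T a₂‖)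
    (f : ℝ → ℝ≥0∞)
    (hf : ∀ R : ℝ, f R = sInf {r : ℝ≥0∞ | ∃ a ∈ D, ‖T a‖ ≤ R ∧ r = ENNReal.ofReal ‖a - v‖}) :
    ∀ R₁ R₂ : ℝ, 0 < R₁ → 0 < R₂ → ∀ t : ℝ, 0 ≤ t → t ≤ 1 →
      f ((1 - t) * R₁ + t * R₂) ≤ ENNReal.ofReal (1 - t) * f R₁ + ENNReal.ofReal t * f R₂ := by
  intro R₁ R₂ hR₁ hR₂ t ht0 ht1
  rcases eq_or_lt_of_le ht0 with rfl | ht0'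
  · simp
  rcases eq_or_lt_of_le ht1 with rfl | ht1'
  · simp
  have hu : (0:ℝ) < 1 - t := by linarith
  set u := ENNReal.ofReal (1 - t) with hu_def
  set w := ENNReal.ofReal t with hw_def
  have hu0 : u ≠ 0 := by simp [hu_def, ENNReal.ofReal_eq_zero, not_le.2 hu]
  have hw0 : w ≠ 0 := by simp [hw_def, ENNReal.ofReal_eq_zero, not_le.2 ht0']
  by_cases h1 : f R₁ = ⊤
  · have : u * f R₁ = ⊤ := by rw [h1, ENNReal.mul_top hu0]
    simp [this]
  by_cases h2 : f R₂ = ⊤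
  · have : w * f R₂ = ⊤ := by rw [h2, ENNReal.mul_top hw0]
    simp [this]
  refine ENNReal.le_of_forall_pos_le_add fun ε hε _ => ?_
  have hε' : (ε : ℝ≥0∞) ≠ 0 := by exact_mod_cast hε.ne'
  have hx : f R₁ < f R₁ + ε := ENNReal.lt_add_right h1 hε'
  have hy : f R₂ < f R₂ + ε := ENNReal.lt_add_right h2 hε'
  nth_rewrite 1 [hf R₁] at hx
  nth_rewrite 1 [hf R₂] at hy
  obtain ⟨x, ⟨a₁, ha₁D, ha₁T, rfl⟩, hxlt⟩ := sInf_lt_iff.mp hx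
  obtain ⟨y, ⟨a₂, ha₂D, ha₂T, rfl⟩, hylt⟩ := sInf_lt_iff.mp hy
  set a := (1 - t) • a₁ + t • a₂ with ha_def
  have haD : a ∈ D := hD ha₁D ha₂D hu.le ht0 (by ring)
  have haT : ‖T a‖ ≤ (1 - t) * R₁ + t * R₂ := by
    refine (hT a₁ ha₁D a₂ ha₂D t ht0 ht1).trans ?_
    exact add_le_add (mul_le_mul_of_nonneg_left ha₁T hu.le)
      (mul_le_mul_of_nonneg_left ha₂T ht0)
  have key : f ((1 - t) * R₁ + t * R₂) ≤ ENNReal.ofReal ‖a - v‖ := by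
    rw [hf]
    exact sInf_le ⟨a, haD, haT, rfl⟩
  have hnorm : ‖a - v‖ ≤ (1 - t) * ‖a₁ - v‖ + t * ‖a₂ - v‖ := by
    have hav : a - v = (1 - t) • (a₁ - v) + t • (a₂ - v) := by
      rw [ha_def]; module
    calc ‖a - v‖ ≤ ‖(1 - t) • (a₁ - v)‖ + ‖t • (a₂ - v)‖ := by
          rw [hav]; exact norm_add_le _ _
      _ = (1 - t) * ‖a₁ - v‖ + t * ‖a₂ - v‖ := by
          rw [norm_smul, norm_smul, Real.norm_eq_abs, Real.norm_eq_abs,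
            abs_of_nonneg hu.le, abs_of_nonneg ht0]
  have huw : u + w = 1 := by
    rw [hu_def, hw_def, ← ENNReal.ofReal_add hu.le ht0]
    norm_num
  calc f ((1 - t) * R₁ + t * R₂) ≤ ENNReal.ofReal ‖a - v‖ := key
    _ ≤ ENNReal.ofReal ((1 - t) * ‖a₁ - v‖ + t * ‖a₂ - v‖) :=
        ENNReal.ofReal_le_ofReal hnorm
    _ = u * ENNReal.ofReal ‖a₁ - v‖ + w * ENNReal.ofReal ‖a₂ - v‖ := by
        rw [ENNReal.ofReal_add (by positivity) (by positivity),
          ENNReal.ofReal_mul hu.le, ENNReal.ofReal_mul ht0]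
    _ ≤ u * (f R₁ + ε) + w * (f R₂ + ε) :=
        add_le_add (mul_le_mul' le_rfl hxlt.le) (mul_le_mul' le_rfl hylt.le)
    _ = u * f R₁ + w * f R₂ + (u + w) * ε := by ring
    _ = u * f R₁ + w * f R₂ + ε := by rw [huw, one_mul]
end

section
/- Let μ be a Borel probability measure on ℝ with finite first moment. For ε > 0 define g_ε(t) = 2 ∫ (t−s)/((t−s)² + ε²) dμ(s). Then for every polynomial p, ∫ g_ε(t) p(t) dμ(t) = ∫∫ [(t−s)²/((t−s)² + ε²)] · [(p(t) − p(s))/(t−s)] dμ(s) dμ(t), where the difference quotient (p(t)−p(s))/(t−s) is interpreted as p'(t) when t = s. -/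
open MeasureTheory

namespace Stmt6Aux

noncomputable def f (ε t s : ℝ) : ℝ := (t - s) / ((t - s) ^ 2 + ε ^ 2)

lemma D_pos {ε : ℝ} (hε : 0 < ε) (t s : ℝ) : 0 < (t - s) ^ 2 + ε ^ 2 := by positivity

lemma f_abs_le {ε : ℝ} (hε : 0 < ε) (t s : ℝ) : |f ε t s| ≤ 1 / (2 * ε) := by
  have hD := D_pos hε t s
  rw [f, abs_div, abs_of_pos hD, div_le_div_iff₀ hD (by positivity)]
  nlinarith [sq_nonneg (|t - s| - ε), sq_abs (t - s), abs_nonneg (t - s)]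

lemma f_neg {ε : ℝ} (t s : ℝ) : f ε s t = - f ε t s := by
  rw [f, f]
  have : (s - t) = -(t - s) := by ring
  rw [this]
  ring_nf

lemma f_abs_symm {ε : ℝ} (t s : ℝ) : |f ε s t| = |f ε t s| := by rw [f_neg, abs_neg]

lemma f_bound2 {ε : ℝ} (hε : 0 < ε) (t s : ℝ) :
    |f ε t s| * (1 + |t|) ≤ (1 / (2 * ε) + 1) * (1 + |s|) := by
  have hD := D_pos hε t s
  have h1 : 1 + |t| ≤ (1 + |t - s|) * (1 + |s|) := by
    have := abs_sub_abs_le_abs_sub t s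
    nlinarith [abs_nonneg (t - s), abs_nonneg s, abs_nonneg t]
  have h2 : |f ε t s| * |t - s| ≤ 1 := by
    rw [f, abs_div, abs_of_pos hD, div_mul_eq_mul_div, div_le_one hD]
    nlinarith [sq_abs (t - s), sq_nonneg ε]
  have h3 := f_abs_le hε t s
  have h4 : |f ε t s| * (1 + |t|) ≤ |f ε t s| * ((1 + |t - s|) * (1 + |s|)) :=
    mul_le_mul_of_nonneg_left h1 (abs_nonneg _)
  nlinarith [abs_nonneg (f ε t s), abs_nonneg s, abs_nonneg (t - s)]

lemma f_cont {ε : ℝ} (hε : 0 < ε) : Continuous (fun z : ℝ × ℝ => f ε z.1 z.2) := by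
  apply Continuous.div (by fun_prop) (by fun_prop)
  exact fun z => ne_of_gt (D_pos hε z.1 z.2)

lemma f_cont1 {ε : ℝ} (hε : 0 < ε) (t : ℝ) : Continuous (fun s : ℝ => f ε t s) :=
  (f_cont hε).comp (Continuous.prodMk_right t)

lemma f_int {ε : ℝ} (hε : 0 < ε) (μ : Measure ℝ) [IsProbabilityMeasure μ] (t : ℝ) :
    Integrable (fun s => f ε t s) μ :=
  Integrable.mono' (integrable_const (1 / (2 * ε)))
    ((f_cont1 hε t).aestronglyMeasurable)
    (Filter.Eventually.of_forall fun s => by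
      rw [Real.norm_eq_abs]; exact f_abs_le hε t s)

/-- The key pointwise identity for the RHS integrand. -/
lemma rhs_eq {ε : ℝ} (hε : 0 < ε) (p : Polynomial ℝ) (t s : ℝ) :
    ((t - s) ^ 2 / ((t - s) ^ 2 + ε ^ 2)) *
        (if t = s then (Polynomial.derivative p).eval t
          else (p.eval t - p.eval s) / (t - s)) =
      f ε t s * (p.eval t - p.eval s) := by
  by_cases h : t = s
  · simp [h, f]
  · have hts : t - s ≠ 0 := sub_ne_zero.mpr h
    have hD := (D_pos hε t s).ne'
    rw [if_neg h, f]
    field_simp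

end Stmt6Aux

namespace Stmt6Aux2

/-- Tail integrals of an integrable nonneg function tend to 0. -/
lemma tail_small (ν : Measure ℝ) [IsProbabilityMeasure ν]
    (hm : Integrable (fun s : ℝ => |s|) ν) {η : ℝ} (hη : 0 < η) :
    ∃ R : ℝ, ∀ t, R ≤ t → (∫ s in Set.Ioi t, |s| ∂ν) ≤ η := by
  have htend : Filter.Tendsto (fun n : ℕ => ∫ s, (Set.Ioi (n : ℝ)).indicator (fun x => |x|) s ∂ν)
      Filter.atTop (nhds (∫ s, (0 : ℝ) ∂ν)) := by
    apply tendsto_integral_of_dominated_convergence (fun s => |s|)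
    · intro n
      exact (hm.aestronglyMeasurable.indicator measurableSet_Ioi)
    · exact hm
    · intro n
      filter_upwards with s
      rw [Real.norm_eq_abs]
      by_cases h : s ∈ Set.Ioi (n : ℝ) <;> simp [Set.indicator, h, abs_abs, abs_nonneg]
    · filter_upwards with s
      obtain ⟨N, hN⟩ := exists_nat_gt s
      apply Filter.Tendsto.congr' (f₁ := fun _ => (0:ℝ))
      · filter_upwards [Filter.eventually_ge_atTop N] with n hn
        have : s ∉ Set.Ioi (n : ℝ) := by
          simp only [Set.mem_Ioi, not_lt]
          exact le_trans (le_of_lt hN) (by exact_mod_cast hn)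
        simp [Set.indicator, this]
      · exact tendsto_const_nhds
  rw [integral_zero] at htend
  have := htend.eventually (gt_mem_nhds hη)
  obtain ⟨N, hN⟩ := this.exists
  refine ⟨N, fun t ht => ?_⟩
  have h1 : (∫ s in Set.Ioi t, |s| ∂ν) ≤ ∫ s in Set.Ioi (N : ℝ), |s| ∂ν := by
    apply setIntegral_mono_set (hm.integrableOn)
    · filter_upwards with s using abs_nonneg s
    · exact Filter.Eventually.of_forall fun s hs => lt_of_le_of_lt ht hs
  rw [integral_indicator measurableSet_Ioi] at hN
  exact h1.trans (le_of_lt hN)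

/-- Markov: the measure of `{x | c < h x}` weighted by `c`. -/
lemma markov (ν : Measure ℝ) [IsProbabilityMeasure ν] {g : ℝ → ℝ}
    (hg : Integrable g ν) {B : Set ℝ} (hB : MeasurableSet B)
    {c : ℝ} (hBg : ∀ x ∈ B, c ≤ g x) :
    (ν B).toReal * c ≤ ∫ x in B, g x ∂ν := by
  have h1 : ∫ x in B, c ∂ν ≤ ∫ x in B, g x ∂ν := by
    apply setIntegral_mono_on (integrableOn_const (measure_ne_top ν B))
      hg.integrableOn hB hBg
  rwa [setIntegral_const, smul_eq_mul] at h1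

end Stmt6Aux2
namespace Stmt6Aux
open Stmt6Aux2

lemma arith_aux {X : ℝ} (hX : 0 < X) : 1/(8*X) + 1/(16*X) ≤ 1/(4*X) := by
  rw [div_add_div _ _ (by positivity) (by positivity),
    div_le_div_iff₀ (by positivity) (by positivity)]
  nlinarith [sq_nonneg X]

lemma half_mass (ν : Measure ℝ) [IsProbabilityMeasure ν]
    (hm : Integrable (fun s : ℝ => |s|) ν) :
    ∃ M : ℝ, 1 ≤ M ∧ 1/2 ≤ (ν (Set.Icc (-M) M)).toReal := by
  obtain ⟨m, hm_def, hm0⟩ : ∃ m, m = ∫ s, |s| ∂ν ∧ 0 ≤ m :=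
    ⟨_, rfl, integral_nonneg fun s => abs_nonneg s⟩
  refine ⟨4 * m + 1, by linarith, ?_⟩
  have hBmeas : MeasurableSet {x : ℝ | 4 * m + 1 < |x|} :=
    measurableSet_lt measurable_const measurable_abs
  have hmark : (ν {x : ℝ | 4 * m + 1 < |x|}).toReal * (4 * m + 1) ≤ m := by
    calc (ν {x : ℝ | 4 * m + 1 < |x|}).toReal * (4 * m + 1)
        ≤ ∫ x in {x : ℝ | 4 * m + 1 < |x|}, |x| ∂ν :=
          markov ν hm hBmeas (fun x hx => le_of_lt hx)
      _ ≤ m := hm_def ▸ setIntegral_le_integral hm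
          (Filter.Eventually.of_forall fun s => abs_nonneg s)
  have hBle : (ν {x : ℝ | 4 * m + 1 < |x|}).toReal ≤ 1/4 := by
    have h0 : 0 ≤ (ν {x : ℝ | 4 * m + 1 < |x|}).toReal := ENNReal.toReal_nonneg
    nlinarith
  have hsub : (Set.Icc (-(4*m+1)) (4*m+1))ᶜ ⊆ {x : ℝ | 4 * m + 1 < |x|} := by
    intro x hx
    simp only [Set.mem_compl_iff, Set.mem_Icc, not_and_or, not_le] at hx
    rcases hx with h | h
    · exact Set.mem_setOf.mpr (lt_of_lt_of_le (by linarith : 4*m+1 < -x) (neg_le_abs x))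
    · exact Set.mem_setOf.mpr (lt_of_lt_of_le h (le_abs_self x))
  have hcle : (ν (Set.Icc (-(4*m+1)) (4*m+1))ᶜ).toReal ≤ 1/4 :=
    le_trans ((ENNReal.toReal_le_toReal (measure_ne_top _ _) (measure_ne_top _ _)).mpr
      (measure_mono hsub)) hBle
  have hadd : (ν (Set.Icc (-(4*m+1)) (4*m+1))).toReal
      + (ν (Set.Icc (-(4*m+1)) (4*m+1))ᶜ).toReal = 1 := by
    rw [← ENNReal.toReal_add (measure_ne_top _ _) (measure_ne_top _ _),
      measure_add_measure_compl measurableSet_Icc, measure_univ, ENNReal.toReal_one]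
  linarith

lemma g_lower (ν : Measure ℝ) [IsProbabilityMeasure ν]
    (hm : Integrable (fun s : ℝ => |s|) ν) {ε : ℝ} (hε : 0 < ε) :
    ∃ R : ℝ, 1 ≤ R ∧ ∀ t, R ≤ t →
      1 / (8 * (1 + ε ^ 2) * (1 + t)) ≤ ∫ s, f ε t s ∂ν := by
  have hE : (0:ℝ) < 1 + ε ^ 2 := by positivity
  obtain ⟨M, hM1, hA⟩ := half_mass ν hm
  have hηpos : 0 < ε / (16 * (1 + ε ^ 2)) := by positivity
  obtain ⟨R₀, hR₀⟩ := tail_small ν hm hηpos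
  refine ⟨max (2 * M + 2) (R₀ + 1), le_trans (by linarith) (le_max_left _ _), fun t ht => ?_⟩
  have ht1 : 2 * M + 2 ≤ t := le_trans (le_max_left _ _) ht
  have ht2 : R₀ + 1 ≤ t := le_trans (le_max_right _ _) ht
  have ht4 : (4:ℝ) ≤ t := by linarith
  have hfint := f_int hε ν t
  have hsplit : (∫ s in Set.Iic (t-1), f ε t s ∂ν) + (∫ s in (Set.Iic (t-1))ᶜ, f ε t s ∂ν)
      = ∫ s, f ε t s ∂ν := integral_add_compl measurableSet_Iic hfint
  -- positive part
  have hnonneg : ∀ s ∈ Set.Iic (t-1), 0 ≤ f ε t s := by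
    intro s hs
    simp only [Set.mem_Iic] at hs
    exact div_nonneg (by linarith) (D_pos hε t s).le
  have hpart1a : (∫ s in Set.Icc (-M) M, f ε t s ∂ν) ≤ ∫ s in Set.Iic (t-1), f ε t s ∂ν := by
    apply setIntegral_mono_set hfint.integrableOn
    · exact (ae_restrict_iff' measurableSet_Iic).mpr (Filter.Eventually.of_forall hnonneg)
    · refine Filter.Eventually.of_forall fun s hs => ?_
      have h2 := (Set.mem_Icc.mp hs).2
      exact Set.mem_Iic.mpr (by linarith : s ≤ t - 1)
  have hpart1b : (ν (Set.Icc (-M) M)).toReal * (1 / ((1 + ε ^ 2) * (t + M)))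
      ≤ ∫ s in Set.Icc (-M) M, f ε t s ∂ν := by
    apply markov ν hfint measurableSet_Icc
    intro s hs
    simp only [Set.mem_Icc] at hs
    have hu1 : 1 ≤ t - s := by linarith [hs.2]
    have hu2 : t - s ≤ t + M := by linarith [hs.1]
    rw [f, div_le_div_iff₀ (by positivity) (D_pos hε t s)]
    have h1 : (t-s)^2 ≤ (t-s)*(t+M) := by nlinarith
    have h2 : ε^2 ≤ ε^2*(t-s) := by nlinarith [sq_nonneg ε]
    have h3 : ε^2*(t-s) ≤ ε^2*(t-s)*(t+M) := by nlinarith [sq_nonneg ε]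
    nlinarith
  have hmeas2 : (1:ℝ)/2 * (1 / ((1 + ε ^ 2) * (t + M)))
      ≤ ∫ s in Set.Icc (-M) M, f ε t s ∂ν :=
    le_trans (mul_le_mul_of_nonneg_right hA (by positivity)) hpart1b
  -- negative part
  have hIoi : (Set.Iic (t-1))ᶜ = Set.Ioi (t-1) := Set.compl_Iic
  have htail : (ν (Set.Ioi (t-1))).toReal * (t - 1) ≤ ε / (16 * (1 + ε ^ 2)) := by
    calc (ν (Set.Ioi (t-1))).toReal * (t - 1)
        ≤ ∫ x in Set.Ioi (t-1), |x| ∂ν := by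
          apply markov ν hm measurableSet_Ioi
          intro x hx
          simp only [Set.mem_Ioi] at hx
          have hx0 : (0:ℝ) < x := by linarith
          rw [abs_of_pos hx0]; linarith
      _ ≤ ε / (16 * (1 + ε ^ 2)) := hR₀ (t-1) (by linarith)
  have hmeasIoi : (ν (Set.Ioi (t-1))).toReal ≤ (ε / (16 * (1 + ε ^ 2))) / (t-1) := by
    rw [le_div_iff₀ (by linarith : (0:ℝ) < t - 1)]
    exact htail
  have hpart2 : |∫ s in (Set.Iic (t-1))ᶜ, f ε t s ∂ν|
      ≤ 1/(2*ε) * ((ε / (16 * (1 + ε ^ 2))) / (t-1)) := by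
    rw [hIoi]
    calc |∫ s in Set.Ioi (t-1), f ε t s ∂ν|
        ≤ 1/(2*ε) * (ν (Set.Ioi (t-1))).toReal := by
          rw [← Real.norm_eq_abs]
          exact norm_setIntegral_le_of_norm_le_const (measure_lt_top _ _)
            (fun x _ => by rw [Real.norm_eq_abs]; exact f_abs_le hε t x)
      _ ≤ _ := mul_le_mul_of_nonneg_left hmeasIoi (by positivity)
  -- combine
  have hN : 1/(2*ε) * ((ε / (16 * (1 + ε ^ 2))) / (t-1)) = 1 / (32 * ((1 + ε ^ 2) * (t - 1))) := by
    have h1 : ε ≠ 0 := ne_of_gt hε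
    have h2 : (1 + ε ^ 2) ≠ 0 := ne_of_gt hE
    have h3 : t - 1 ≠ 0 := by intro h; rw [sub_eq_zero] at h; linarith
    field_simp
    ring
  have hX : (0:ℝ) < (1 + ε ^ 2) * (1 + t) := by nlinarith
  have harith := arith_aux hX
  have B1 : 1 / (32 * ((1 + ε ^ 2) * (t - 1))) ≤ 1/(16*((1 + ε ^ 2)*(1+t))) := by
    apply one_div_le_one_div_of_le (by positivity)
    nlinarith
  have B2 : 1/(4*((1 + ε ^ 2)*(1+t))) ≤ 1/2 * (1 / ((1 + ε ^ 2) * (t + M))) := by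
    rw [div_mul_div_comm, one_mul]
    apply one_div_le_one_div_of_le (by positivity)
    nlinarith
  have e1 : 1 / (8 * (1 + ε ^ 2) * (1 + t)) = 1/(8*((1 + ε ^ 2)*(1+t))) := by ring_nf
  have habs := abs_le.mp hpart2
  rw [hN] at habs
  rw [e1]
  linarith [hmeas2.trans hpart1a]

end Stmt6Aux
namespace Stmt6Aux
open Stmt6Aux2

lemma g_abs_lower (μ : Measure ℝ) [IsProbabilityMeasure μ]
    (hmom : Integrable (fun s : ℝ => |s|) μ) {ε : ℝ} (hε : 0 < ε) :
    ∃ c : ℝ, 0 < c ∧ ∃ R : ℝ, 1 ≤ R ∧ ∀ t, R ≤ |t| →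
      c / (1 + |t|) ≤ |∫ s, f ε t s ∂μ| := by
  obtain ⟨R₁, hR₁1, hR₁⟩ := g_lower μ hmom hε
  have hνprob : IsProbabilityMeasure (Measure.map (fun x : ℝ => -x) μ) :=
    Measure.isProbabilityMeasure_map measurable_neg.aemeasurable
  have hνmom : Integrable (fun s : ℝ => |s|) (Measure.map (fun x : ℝ => -x) μ) := by
    rw [integrable_map_measure (continuous_abs.aestronglyMeasurable) measurable_neg.aemeasurable]
    have : (abs ∘ (Neg.neg : ℝ → ℝ)) = fun s : ℝ => |s| := by
      funext s; simp [Function.comp, abs_neg]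
    rwa [this]
  obtain ⟨R₂, hR₂1, hR₂⟩ := g_lower (Measure.map (fun x : ℝ => -x) μ) hνmom hε
  refine ⟨1 / (8 * (1 + ε ^ 2)), by positivity, max R₁ R₂, le_trans hR₁1 (le_max_left _ _),
    fun t ht => ?_⟩
  rcases le_or_gt 0 t with h0 | h0
  · rw [abs_of_nonneg h0] at ht ⊢
    have := hR₁ t (le_trans (le_max_left _ _) ht)
    calc 1 / (8 * (1 + ε ^ 2)) / (1 + t) = 1 / (8 * (1 + ε ^ 2) * (1 + t)) := by
          rw [div_div]
      _ ≤ ∫ s, f ε t s ∂μ := this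
      _ ≤ |∫ s, f ε t s ∂μ| := le_abs_self _
  · rw [abs_of_neg h0] at ht ⊢
    have hkey : (∫ u, f ε (-t) u ∂(Measure.map (fun x : ℝ => -x) μ)) = - ∫ s, f ε t s ∂μ := by
      rw [integral_map measurable_neg.aemeasurable ((f_cont1 hε (-t)).aestronglyMeasurable)]
      rw [← integral_neg]
      refine integral_congr_ae (Filter.Eventually.of_forall fun s => ?_)
      show f ε (-t) (-s) = - f ε t s
      rw [f, f]
      have e1 : -t - -s = -(t - s) := by ring
      rw [e1, neg_sq, neg_div]
    have := hR₂ (-t) (le_trans (le_max_right _ _) ht)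
    rw [hkey] at this
    calc 1 / (8 * (1 + ε ^ 2)) / (1 + -t) = 1 / (8 * (1 + ε ^ 2) * (1 + -t)) := by
          rw [div_div]
      _ ≤ - ∫ s, f ε t s ∂μ := this
      _ ≤ |∫ s, f ε t s ∂μ| := neg_le_abs _

lemma polybound (p : Polynomial ℝ) (a b : ℝ) :
    ∃ B : ℝ, 0 ≤ B ∧ ∀ x ∈ Set.Icc a b, |p.eval x| ≤ B := by
  rcases le_or_gt a b with hab | hab
  · obtain ⟨x, hx, hmax⟩ := isCompact_Icc.exists_isMaxOn (Set.nonempty_Icc.mpr hab)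
      ((continuous_abs.comp (Polynomial.continuous p)).continuousOn
        (s := Set.Icc a b))
    exact ⟨|p.eval x|, abs_nonneg _, fun y hy => hmax hy⟩
  · exact ⟨0, le_refl 0, fun x hx => absurd ((Set.mem_Icc.mp hx).1.trans (Set.mem_Icc.mp hx).2)
      (not_le.mpr hab)⟩

end Stmt6Aux
namespace Stmt6Aux
open Stmt6Aux2

variable {μ : Measure ℝ} [IsProbabilityMeasure μ] {ε : ℝ} {p : Polynomial ℝ}

lemma f_mul_bound1 (hε : 0 < ε) (p : Polynomial ℝ) (t s : ℝ) :
    |f ε t s * p.eval t| ≤ (1/(2*ε)+1) * (|p.eval t| / (1 + |t|)) * (1 + |s|) := by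
  have h1t : (0:ℝ) < 1 + |t| := by positivity
  have h := f_bound2 hε t s
  have h2 : |f ε t s| ≤ (1/(2*ε)+1) * (1 + |s|) / (1 + |t|) := by
    rw [le_div_iff₀ h1t]; linarith
  rw [abs_mul]
  calc |f ε t s| * |p.eval t| ≤ ((1/(2*ε)+1) * (1 + |s|) / (1 + |t|)) * |p.eval t| :=
        mul_le_mul_of_nonneg_right h2 (abs_nonneg _)
    _ = (1/(2*ε)+1) * (|p.eval t| / (1 + |t|)) * (1 + |s|) := by ring

lemma f_mul_bound2 (hε : 0 < ε) (p : Polynomial ℝ) (t s : ℝ) :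
    |f ε t s * p.eval s| ≤ ((1/(2*ε)+1) * (1 + |t|)) * (|p.eval s| / (1 + |s|)) := by
  have h1s : (0:ℝ) < 1 + |s| := by positivity
  have h := f_bound2 hε s t
  rw [← f_abs_symm] at h
  have h2 : |f ε t s| ≤ (1/(2*ε)+1) * (1 + |t|) / (1 + |s|) := by
    rw [le_div_iff₀ h1s]; linarith
  rw [abs_mul]
  calc |f ε t s| * |p.eval s| ≤ ((1/(2*ε)+1) * (1 + |t|) / (1 + |s|)) * |p.eval s| :=
        mul_le_mul_of_nonneg_right h2 (abs_nonneg _)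
    _ = ((1/(2*ε)+1) * (1 + |t|)) * (|p.eval s| / (1 + |s|)) := by ring

lemma int_one_abs (hmom : Integrable (fun t : ℝ => |t|) μ) :
    Integrable (fun s : ℝ => 1 + |s|) μ := (integrable_const 1).add hmom

lemma prod_int1 (hε : 0 < ε) (hmom : Integrable (fun t : ℝ => |t|) μ)
    (hC : Integrable (fun s : ℝ => |p.eval s| / (1 + |s|)) μ) :
    Integrable (fun z : ℝ × ℝ => f ε z.1 z.2 * p.eval z.1) (μ.prod μ) := by
  apply Integrable.mono' ((hC.const_mul (1/(2*ε)+1)).mul_prod (int_one_abs hmom))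
  · exact ((f_cont hε).mul ((Polynomial.continuous p).comp continuous_fst)).aestronglyMeasurable
  · exact Filter.Eventually.of_forall fun z => by
      rw [Real.norm_eq_abs]; exact f_mul_bound1 hε p z.1 z.2

lemma prod_int2 (hε : 0 < ε) (hmom : Integrable (fun t : ℝ => |t|) μ)
    (hC : Integrable (fun s : ℝ => |p.eval s| / (1 + |s|)) μ) :
    Integrable (fun z : ℝ × ℝ => f ε z.1 z.2 * p.eval z.2) (μ.prod μ) := by
  apply Integrable.mono' (((int_one_abs hmom).const_mul (1/(2*ε)+1)).mul_prod hC)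
  · exact ((f_cont hε).mul ((Polynomial.continuous p).comp continuous_snd)).aestronglyMeasurable
  · exact Filter.Eventually.of_forall fun z => by
      rw [Real.norm_eq_abs]
      calc |f ε z.1 z.2 * p.eval z.2| ≤ ((1/(2*ε)+1) * (1 + |z.1|)) * (|p.eval z.2| / (1 + |z.2|)) :=
            f_mul_bound2 hε p z.1 z.2
        _ = (1/(2*ε)+1) * (1 + |z.1|) * (|p.eval z.2| / (1 + |z.2|)) := by ring

lemma caseC (hε : 0 < ε) (hmom : Integrable (fun t : ℝ => |t|) μ)
    (hC : Integrable (fun s : ℝ => |p.eval s| / (1 + |s|)) μ) :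
    ∫ t, (2 * ∫ s, f ε t s ∂μ) * p.eval t ∂μ
      = ∫ t, ∫ s, f ε t s * (p.eval t - p.eval s) ∂μ ∂μ := by
  have I1 := prod_int1 hε hmom hC
  have I2 := prod_int2 hε hmom hC
  have h := integral_prod_swap (μ := μ) (ν := μ) (fun z : ℝ × ℝ => f ε z.1 z.2 * p.eval z.1)
  have h2 : (∫ z : ℝ × ℝ, f ε z.2 z.1 * p.eval z.2 ∂(μ.prod μ))
      = - ∫ z : ℝ × ℝ, f ε z.1 z.2 * p.eval z.2 ∂(μ.prod μ) := by
    rw [← integral_neg]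
    refine integral_congr_ae (Filter.Eventually.of_forall fun z => ?_)
    show f ε z.2 z.1 * p.eval z.2 = -(f ε z.1 z.2 * p.eval z.2)
    rw [f_neg]; ring
  have hswap2 : (∫ z : ℝ × ℝ, f ε z.1 z.2 * p.eval z.2 ∂(μ.prod μ))
      = - ∫ z : ℝ × ℝ, f ε z.1 z.2 * p.eval z.1 ∂(μ.prod μ) := by
    have h' : (∫ z : ℝ × ℝ, f ε z.2 z.1 * p.eval z.2 ∂(μ.prod μ))
        = ∫ z : ℝ × ℝ, f ε z.1 z.2 * p.eval z.1 ∂(μ.prod μ) := h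
    linarith [h', h2]
  calc ∫ t, (2 * ∫ s, f ε t s ∂μ) * p.eval t ∂μ
      = ∫ t, ∫ s, 2 * f ε t s * p.eval t ∂μ ∂μ := by
        refine integral_congr_ae (Filter.Eventually.of_forall fun t => ?_)
        show (2 * ∫ s, f ε t s ∂μ) * p.eval t = ∫ s, 2 * f ε t s * p.eval t ∂μ
        rw [integral_mul_const, integral_const_mul]
    _ = ∫ z : ℝ × ℝ, 2 * f ε z.1 z.2 * p.eval z.1 ∂(μ.prod μ) := by
        apply integral_integral
        refine (I1.const_mul 2).congr (Filter.Eventually.of_forall fun z => ?_)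
        show 2 * (f ε z.1 z.2 * p.eval z.1) = Function.uncurry (fun t s => 2 * f ε t s * p.eval t) z
        simp only [Function.uncurry]; ring
    _ = ∫ z : ℝ × ℝ, f ε z.1 z.2 * (p.eval z.1 - p.eval z.2) ∂(μ.prod μ) := by
        rw [show (fun z : ℝ × ℝ => f ε z.1 z.2 * (p.eval z.1 - p.eval z.2))
            = fun z : ℝ × ℝ => f ε z.1 z.2 * p.eval z.1 - f ε z.1 z.2 * p.eval z.2 from
            by funext z; ring, integral_sub I1 I2, hswap2]
        rw [show (fun z : ℝ × ℝ => 2 * f ε z.1 z.2 * p.eval z.1)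
            = fun z : ℝ × ℝ => 2 * (f ε z.1 z.2 * p.eval z.1) from by funext z; ring,
          integral_const_mul]
        ring
    _ = ∫ t, ∫ s, f ε t s * (p.eval t - p.eval s) ∂μ ∂μ := by
        symm
        apply integral_integral
        refine (I1.sub I2).congr (Filter.Eventually.of_forall fun z => ?_)
        show _ = Function.uncurry (fun t s => f ε t s * (p.eval t - p.eval s)) z
        simp only [Function.uncurry, Pi.sub_apply]; ring

end Stmt6Aux
namespace Stmt6Aux
open Stmt6Aux2

variable {μ : Measure ℝ} [IsProbabilityMeasure μ] {ε : ℝ} {p : Polynomial ℝ}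

lemma notC_inner (hε : 0 < ε)
    (hnC : ¬ Integrable (fun s : ℝ => |p.eval s| / (1 + |s|)) μ) (t : ℝ) :
    ¬ Integrable (fun s => f ε t s * (p.eval t - p.eval s)) μ := by
  intro h
  have h1 : Integrable (fun s => f ε t s * p.eval t) μ := (f_int hε μ t).mul_const _
  have h2 : Integrable (fun s => f ε t s * p.eval s) μ :=
    (h1.sub h).congr (Filter.Eventually.of_forall fun s => by
      show f ε t s * p.eval t - f ε t s * (p.eval t - p.eval s) = _
      ring)
  obtain ⟨B, hB0, hB⟩ := polybound p (t-1) (t+1)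
  apply hnC
  apply Integrable.mono' ((h2.abs.const_mul ((1+ε^2)*(1+|t|))).add (integrable_const B))
  · exact ((continuous_abs.comp (Polynomial.continuous p)).div
      (by continuity) (fun s => by positivity)).aestronglyMeasurable
  · refine Filter.Eventually.of_forall fun s => ?_
    simp only [Pi.add_apply]
    have h1s : (0:ℝ) < 1 + |s| := by positivity
    rw [Real.norm_eq_abs, abs_of_nonneg (div_nonneg (abs_nonneg _) h1s.le)]
    have hterm1 : 0 ≤ (1+ε^2)*(1+|t|) * |f ε t s * p.eval s| := by positivity
    by_cases hcase : 1 ≤ |t - s|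
    · have habsts : |t - s| ≤ (1+|t|)*(1+|s|) := by
        have := abs_sub t s
        nlinarith [abs_nonneg t, abs_nonneg s]
      have e0 : 1 ≤ |t-s| * ((1+|t|)*(1+|s|)) := by nlinarith [abs_nonneg t, abs_nonneg s]
      have e1 : (t-s)^2 ≤ |t-s| * ((1+|t|)*(1+|s|)) := by
        nlinarith [sq_abs (t-s), abs_nonneg (t-s)]
      have e2 : ε^2 ≤ ε^2 * (|t-s| * ((1+|t|)*(1+|s|))) := by nlinarith [sq_nonneg ε]
      have key : 1 ≤ (1+ε^2)*(1+|t|) * |f ε t s| * (1+|s|) := by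
        have habsf : |f ε t s| = |t-s| / ((t-s)^2+ε^2) := by
          rw [f, abs_div, abs_of_pos (D_pos hε t s)]
        rw [habsf, show (1+ε^2)*(1+|t|) * (|t-s| / ((t-s)^2+ε^2)) * (1+|s|)
            = ((1+ε^2)*(1+|t|) * |t-s| * (1+|s|)) / ((t-s)^2+ε^2) from by ring,
          le_div_iff₀ (D_pos hε t s), one_mul]
        nlinarith [e1, e2]
      have : |p.eval s| / (1+|s|) ≤ (1+ε^2)*(1+|t|) * |f ε t s * p.eval s| := by
        rw [div_le_iff₀ h1s, abs_mul]
        nlinarith [abs_nonneg (p.eval s), key]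
      linarith
    · have hmem : s ∈ Set.Icc (t-1) (t+1) := by
        push_neg at hcase
        rw [abs_sub_comm] at hcase
        obtain ⟨ha, hb⟩ := abs_lt.mp hcase
        exact Set.mem_Icc.mpr ⟨by linarith, by linarith⟩
      have : |p.eval s| / (1+|s|) ≤ B :=
        le_trans (div_le_self (abs_nonneg _) (by linarith [abs_nonneg s])) (hB s hmem)
      linarith

lemma notC_lhs (hε : 0 < ε) (hmom : Integrable (fun t : ℝ => |t|) μ)
    (hnC : ¬ Integrable (fun s : ℝ => |p.eval s| / (1 + |s|)) μ) :
    ¬ Integrable (fun t => (2 * ∫ s, f ε t s ∂μ) * p.eval t) μ := by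
  intro hInt
  obtain ⟨c, hc, R, hR1, hR⟩ := g_abs_lower μ hmom hε
  obtain ⟨B, hB0, hB⟩ := polybound p (-R) R
  apply hnC
  apply Integrable.mono' ((hInt.abs.const_mul (1/(2*c))).add (integrable_const B))
  · exact ((continuous_abs.comp (Polynomial.continuous p)).div
      (by continuity) (fun s => by positivity)).aestronglyMeasurable
  · refine Filter.Eventually.of_forall fun t => ?_
    simp only [Pi.add_apply]
    have h1t : (0:ℝ) < 1 + |t| := by positivity
    rw [Real.norm_eq_abs, abs_of_nonneg (div_nonneg (abs_nonneg _) h1t.le)]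
    have hterm1 : 0 ≤ 1/(2*c) * |(2 * ∫ s, f ε t s ∂μ) * p.eval t| := by positivity
    by_cases hcase : R ≤ |t|
    · have key := hR t hcase
      have key2 : c ≤ |∫ s, f ε t s ∂μ| * (1+|t|) := by
        rw [div_le_iff₀ h1t] at key; linarith
      have e : 1/(2*c) * |(2 * ∫ s, f ε t s ∂μ) * p.eval t|
          = (1/c) * (|∫ s, f ε t s ∂μ| * |p.eval t|) := by
        rw [abs_mul, abs_mul, abs_two]
        field_simp
      rw [e]
      have : |p.eval t| / (1+|t|) ≤ (1/c) * (|∫ s, f ε t s ∂μ| * |p.eval t|) := by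
        rw [div_le_iff₀ h1t]
        have k3 : c * |p.eval t| ≤ |∫ s, f ε t s ∂μ| * (1+|t|) * |p.eval t| :=
          mul_le_mul_of_nonneg_right key2 (abs_nonneg _)
        have hc' : (0:ℝ) < 1/c := by positivity
        have k4 := mul_le_mul_of_nonneg_left k3 hc'.le
        have k5 : (1/c)*(c*|p.eval t|) = |p.eval t| := by field_simp
        nlinarith [k4, k5]
      linarith
    · have hmem : t ∈ Set.Icc (-R) R := by
        push_neg at hcase
        obtain ⟨ha, hb⟩ := abs_lt.mp hcase
        exact Set.mem_Icc.mpr ⟨by linarith, by linarith⟩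
      have : |p.eval t| / (1+|t|) ≤ B :=
        le_trans (div_le_self (abs_nonneg _) (by linarith [abs_nonneg t])) (hB t hmem)
      linarith

end Stmt6Aux

/- The symmetrization identity: with `g_ε(t) = 2∫ (t−s)/((t−s)²+ε²) dμ(s)`, for every
polynomial `p`,
`∫ g_ε p dμ = ∫∫ (t−s)²/((t−s)²+ε²) · (p(t)−p(s))/(t−s) dμ(s) dμ(t)`,
where the difference quotient is `p'(t)` on the diagonal. -/
open Stmt6Aux in
theorem stmt_6 (μ : Measure ℝ) [IsProbabilityMeasure μ]
    (hmom : Integrable (fun t : ℝ => |t|) μ) (ε : ℝ) (hε : 0 < ε) (p : Polynomial ℝ) :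
    ∫ t, (2 * ∫ s, (t - s) / ((t - s) ^ 2 + ε ^ 2) ∂μ) * p.eval t ∂μ =
      ∫ t, ∫ s, ((t - s) ^ 2 / ((t - s) ^ 2 + ε ^ 2)) *
        (if t = s then (Polynomial.derivative p).eval t
          else (p.eval t - p.eval s) / (t - s)) ∂μ ∂μ := by
  have hL : (∫ t, (2 * ∫ s, (t - s) / ((t - s) ^ 2 + ε ^ 2) ∂μ) * p.eval t ∂μ)
      = ∫ t, (2 * ∫ s, f ε t s ∂μ) * p.eval t ∂μ := rfl
  have hR : (∫ t, ∫ s, ((t - s) ^ 2 / ((t - s) ^ 2 + ε ^ 2)) *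
        (if t = s then (Polynomial.derivative p).eval t
          else (p.eval t - p.eval s) / (t - s)) ∂μ ∂μ)
      = ∫ t, ∫ s, f ε t s * (p.eval t - p.eval s) ∂μ ∂μ := by
    refine integral_congr_ae (Filter.Eventually.of_forall fun t => ?_)
    refine integral_congr_ae (Filter.Eventually.of_forall fun s => ?_)
    exact rhs_eq hε p t s
  rw [hL, hR]
  by_cases hC : Integrable (fun s : ℝ => |p.eval s| / (1 + |s|)) μ
  · exact caseC hε hmom hC
  · rw [integral_undef (notC_lhs hε hmom hC)]
    have hz : ∀ t, (∫ s, f ε t s * (p.eval t - p.eval s) ∂μ) = 0 :=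
      fun t => integral_undef (notC_inner hε hC t)
    rw [integral_congr_ae (Filter.Eventually.of_forall fun t => hz t), integral_zero]
end

section
/- Let x be a self-adjoint element of a tracial von Neumann algebra with spectral measure μ on ℝ (compactly supported). If μ has no atoms, then the free Stein irregularity Σ*(x) = 0; i.e., for every η > 0 there exist ξ ∈ L²(μ) and a function A ∈ L²(μ×μ) with ∫ ξ(t)p(t) dμ(t) = ∫∫ A(t,s)·(p(t)−p(s))/(t−s) dμ(s)dμ(t) for all polynomials p, and ∫∫|A − 1|² d(μ×μ) < η². -/
open MeasureTheory Filter

theorem stmt_7 (μ : Measure ℝ) [IsProbabilityMeasure μ] [NullSingletonClass μ]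
    (K : Set ℝ) (hK : IsCompact K) (hμK : μ Kᶜ = 0) :
    ∀ η : ℝ, 0 < η → ∃ (ξ : ℝ → ℝ) (A : ℝ × ℝ → ℝ),
      MemLp ξ 2 μ ∧ MemLp A 2 (μ.prod μ) ∧
      (∀ p : Polynomial ℝ,
        ∫ t, ξ t * p.eval t ∂μ =
          ∫ t, ∫ s, A (t, s) *
            (if t = s then (Polynomial.derivative p).eval t
              else (p.eval t - p.eval s) / (t - s)) ∂μ ∂μ) ∧
      ∫ q, |A q - 1| ^ 2 ∂(μ.prod μ) < η ^ 2 := by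
  intro η hη
  -- the diagonal is null
  have hdiag : μ.prod μ {q : ℝ × ℝ | q.1 = q.2} = 0 := by
    have hm : MeasurableSet {q : ℝ × ℝ | q.1 = q.2} :=
      measurableSet_eq_fun measurable_fst measurable_snd
    rw [Measure.prod_apply hm]
    have h : ∀ t : ℝ, μ (Prod.mk t ⁻¹' {q : ℝ × ℝ | q.1 = q.2}) = 0 := by
      intro t
      have : Prod.mk t ⁻¹' {q : ℝ × ℝ | q.1 = q.2} = {t} := by
        ext s; simp [eq_comm]
      rw [this]; exact measure_singleton t
    simp [h]
  -- choose ε small via dominated convergence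
  set F : ℕ → ℝ × ℝ → ℝ := fun n q =>
    ((1/((n:ℝ)+1))^2 / ((q.1 - q.2)^2 + (1/((n:ℝ)+1))^2))^2 with hFdef
  have hεn : ∀ n : ℕ, (0:ℝ) < 1/((n:ℝ)+1) := by intro n; positivity
  have hdenn : ∀ (n : ℕ) (q : ℝ × ℝ), (0:ℝ) < (q.1 - q.2)^2 + (1/((n:ℝ)+1))^2 := by
    intro n q
    have := hεn n
    positivity
  have hFmeas : ∀ n, AEStronglyMeasurable (F n) (μ.prod μ) := by
    intro n
    apply Continuous.aestronglyMeasurable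
    apply Continuous.pow
    exact Continuous.div continuous_const (by fun_prop) (fun q => (hdenn n q).ne')
  have hFbound : ∀ n, ∀ᵐ q ∂(μ.prod μ), ‖F n q‖ ≤ (1:ℝ) := by
    intro n
    refine Filter.Eventually.of_forall (fun q => ?_)
    have h1 : (0:ℝ) ≤ (1/((n:ℝ)+1))^2 := sq_nonneg _
    have h2 := hdenn n q
    have h3 : (1/((n:ℝ)+1))^2 / ((q.1 - q.2)^2 + (1/((n:ℝ)+1))^2) ≤ 1 := by
      rw [div_le_one h2]; nlinarith [sq_nonneg (q.1 - q.2)]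
    have h4 : (0:ℝ) ≤ (1/((n:ℝ)+1))^2 / ((q.1 - q.2)^2 + (1/((n:ℝ)+1))^2) :=
      div_nonneg h1 h2.le
    rw [Real.norm_eq_abs, hFdef]
    rw [abs_of_nonneg (by positivity)]
    nlinarith
  have hFlim : ∀ᵐ q ∂(μ.prod μ), Tendsto (fun n => F n q) atTop (nhds 0) := by
    have hne : ∀ᵐ q ∂(μ.prod μ), q.1 ≠ q.2 := by
      rw [ae_iff]; simpa [not_not] using hdiag
    refine hne.mono (fun q hq => ?_)
    have hd : (q.1 - q.2)^2 ≠ 0 := pow_ne_zero _ (sub_ne_zero.mpr hq)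
    have h0 : Tendsto (fun n : ℕ => 1/((n:ℝ)+1)) atTop (nhds 0) :=
      tendsto_one_div_add_atTop_nhds_zero_nat
    have hc : ContinuousAt (fun e : ℝ => (e^2 / ((q.1 - q.2)^2 + e^2))^2) 0 := by
      apply ContinuousAt.pow
      apply ContinuousAt.div (by fun_prop) (by fun_prop)
      simpa using hd
    have := hc.tendsto.comp h0
    simp only [hFdef]
    simpa [Function.comp_def, one_div] using this
  have htend : Tendsto (fun n => ∫ q, F n q ∂(μ.prod μ)) atTop (nhds 0) := by
    have := tendsto_integral_of_dominated_convergence (μ := μ.prod μ)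
      (F := F) (f := fun _ => (0:ℝ)) (fun _ => (1:ℝ)) hFmeas
      (integrable_const 1) hFbound hFlim
    simpa using this
  obtain ⟨n, hn⟩ : ∃ n, ∫ q, F n q ∂(μ.prod μ) < η^2 :=
    (htend.eventually_lt_const (by positivity)).exists
  set ε : ℝ := 1/((n:ℝ)+1) with hεdef
  have hε : 0 < ε := hεn n
  have hden : ∀ t s : ℝ, (0:ℝ) < (t - s)^2 + ε^2 := by intro t s; positivity
  -- the kernel and conjugate variable
  set h : ℝ → ℝ → ℝ := fun t s => (t - s) / ((t - s)^2 + ε^2) with hhdef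
  set A : ℝ × ℝ → ℝ := fun q => (q.1 - q.2)^2 / ((q.1 - q.2)^2 + ε^2) with hAdef
  set ξ : ℝ → ℝ := fun t => ∫ s, 2 * h t s ∂μ with hξdef
  -- bounds
  have hhb : ∀ t s : ℝ, |h t s| ≤ 1/(2*ε) := by
    intro t s
    have h2 : 2*ε*|t - s| ≤ (t - s)^2 + ε^2 := by
      nlinarith [sq_nonneg (|t - s| - ε), sq_abs (t - s), abs_nonneg (t - s)]
    rw [hhdef]
    rw [abs_div, abs_of_pos (hden t s), div_le_div_iff₀ (hden t s) (by positivity)]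
    nlinarith [abs_nonneg (t - s)]
  have hAb : ∀ q : ℝ × ℝ, |A q| ≤ 1 := by
    intro q
    rw [hAdef, abs_div, abs_of_pos (hden q.1 q.2), div_le_one (hden q.1 q.2)]
    rw [abs_of_nonneg (sq_nonneg _)]
    nlinarith [sq_nonneg ε, hε]
  have hhc : Continuous (fun q : ℝ × ℝ => h q.1 q.2) :=
    Continuous.div (by fun_prop) (by fun_prop) (fun q => (hden q.1 q.2).ne')
  have hAc : Continuous A :=
    Continuous.div (by fun_prop) (by fun_prop) (fun q => (hden q.1 q.2).ne')
  have hξm : StronglyMeasurable ξ := by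
    have : StronglyMeasurable (fun q : ℝ × ℝ => 2 * h q.1 q.2) :=
      (continuous_const.mul hhc).stronglyMeasurable
    exact this.integral_prod_right'
  have hξb : ∀ t : ℝ, ‖ξ t‖ ≤ 1/ε := by
    intro t
    have : ‖ξ t‖ ≤ (1/ε) * (μ Set.univ).toReal := by
      apply norm_integral_le_of_norm_le_const
      refine Filter.Eventually.of_forall (fun s => ?_)
      rw [Real.norm_eq_abs, abs_mul]
      have := hhb t s
      calc |2| * |h t s| ≤ 2 * (1/(2*ε)) := by
            rw [abs_two]; exact mul_le_mul_of_nonneg_left this (by norm_num)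
        _ = 1/ε := by field_simp
    simpa using this
  refine ⟨ξ, A, ?_, ?_, ?_, ?_⟩
  · exact MemLp.of_bound hξm.aestronglyMeasurable (1/ε)
      (Filter.Eventually.of_forall hξb)
  · exact MemLp.of_bound hAc.aestronglyMeasurable 1
      (Filter.Eventually.of_forall (fun q => by rw [Real.norm_eq_abs]; exact hAb q))
  · -- the Stein identity
    intro p
    have hPc : Continuous (fun t : ℝ => p.eval t) := p.continuous
    obtain ⟨C, hC⟩ : ∃ C, ∀ t ∈ K, ‖p.eval t‖ ≤ C :=
      hK.exists_bound_of_continuousOn hPc.continuousOn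
    have haeK : ∀ᵐ t ∂μ, t ∈ K := by
      rw [ae_iff]; exact hμK
    have haeK1 : ∀ᵐ q ∂(μ.prod μ), q.1 ∈ K := by
      rw [ae_iff]
      have : {q : ℝ × ℝ | ¬ q.1 ∈ K} = Kᶜ ×ˢ Set.univ := by ext q; simp
      rw [this, Measure.prod_prod, hμK, zero_mul]
    have haeK2 : ∀ᵐ q ∂(μ.prod μ), q.2 ∈ K := by
      rw [ae_iff]
      have : {q : ℝ × ℝ | ¬ q.2 ∈ K} = Set.univ ×ˢ Kᶜ := by ext q; simp
      rw [this, Measure.prod_prod, hμK, mul_zero]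
    have hPint : Integrable (fun t : ℝ => p.eval t) μ := by
      refine memLp_one_iff_integrable.mp
        (MemLp.of_bound hPc.aestronglyMeasurable C (haeK.mono (fun t ht => hC t ht)))
    -- integrability of the product kernels
    have hG1int : Integrable (fun q : ℝ × ℝ => h q.1 q.2 * p.eval q.1) (μ.prod μ) := by
      refine memLp_one_iff_integrable.mp
        (MemLp.of_bound (hhc.mul (hPc.comp continuous_fst)).aestronglyMeasurable
          ((1/(2*ε)) * C) (haeK1.mono (fun q hq => ?_)))
      rw [Real.norm_eq_abs, abs_mul]
      have h1 := hhb q.1 q.2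
      have h2 := hC q.1 hq
      rw [Real.norm_eq_abs] at h2
      have h3 : (0:ℝ) ≤ |p.eval q.1| := abs_nonneg _
      nlinarith [abs_nonneg (h q.1 q.2)]
    have hG2int : Integrable (fun q : ℝ × ℝ => h q.1 q.2 * p.eval q.2) (μ.prod μ) := by
      refine memLp_one_iff_integrable.mp
        (MemLp.of_bound (hhc.mul (hPc.comp continuous_snd)).aestronglyMeasurable
          ((1/(2*ε)) * C) (haeK2.mono (fun q hq => ?_)))
      rw [Real.norm_eq_abs, abs_mul]
      have h1 := hhb q.1 q.2
      have h2 := hC q.2 hq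
      rw [Real.norm_eq_abs] at h2
      have h3 : (0:ℝ) ≤ |p.eval q.2| := abs_nonneg _
      nlinarith [abs_nonneg (h q.1 q.2)]
    have hG0int : Integrable (fun q : ℝ × ℝ => 2 * h q.1 q.2 * p.eval q.1) (μ.prod μ) := by
      have := hG1int.const_mul 2
      simpa [mul_assoc] using this
    have hGSint : Integrable
        (fun q : ℝ × ℝ => h q.1 q.2 * (p.eval q.1 - p.eval q.2)) (μ.prod μ) := by
      have := hG1int.sub hG2int
      simpa [mul_sub, Pi.sub_def] using this
    -- pointwise identity for the right-hand integrand
    have key : ∀ t s : ℝ, A (t, s) *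
        (if t = s then (Polynomial.derivative p).eval t
          else (p.eval t - p.eval s) / (t - s)) = h t s * (p.eval t - p.eval s) := by
      intro t s
      by_cases hts : t = s
      · subst hts
        simp [hAdef, hhdef]
      · rw [if_neg hts]
        have hd : t - s ≠ 0 := sub_ne_zero.mpr hts
        rw [hAdef, hhdef]
        field_simp
    -- antisymmetry / swap identity
    have hswap : ∫ q, h q.1 q.2 * p.eval q.1 ∂(μ.prod μ)
        = - ∫ q, h q.1 q.2 * p.eval q.2 ∂(μ.prod μ) := by
      have e1 : ∫ q, h q.1 q.2 * p.eval q.1 ∂(μ.prod μ)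
          = ∫ q, h q.2 q.1 * p.eval q.2 ∂(μ.prod μ) := by
        rw [← integral_prod_swap (fun q : ℝ × ℝ => h q.2 q.1 * p.eval q.2)]
        simp only [Prod.fst_swap, Prod.snd_swap]
      have e2 : ∀ q : ℝ × ℝ, h q.2 q.1 * p.eval q.2 = -(h q.1 q.2 * p.eval q.2) := by
        intro q
        have h1 : ((q.2 - q.1)^2 + ε^2) ≠ 0 := (hden q.2 q.1).ne'
        have h2 : ((q.1 - q.2)^2 + ε^2) ≠ 0 := (hden q.1 q.2).ne'
        simp only [hhdef]
        field_simp
        ring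
      rw [e1]
      simp_rw [e2]
      rw [integral_neg]
    -- chain of equalities
    have l1 : ∀ t, ξ t * p.eval t = ∫ s, 2 * h t s * p.eval t ∂μ := by
      intro t
      rw [hξdef]
      exact (integral_mul_const _ _).symm
    calc ∫ t, ξ t * p.eval t ∂μ
        = ∫ t, ∫ s, 2 * h t s * p.eval t ∂μ ∂μ := by simp_rw [l1]
      _ = ∫ q, 2 * h q.1 q.2 * p.eval q.1 ∂(μ.prod μ) := (integral_prod _ hG0int).symm
      _ = 2 * ∫ q, h q.1 q.2 * p.eval q.1 ∂(μ.prod μ) := by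
            simp_rw [mul_assoc]; exact integral_const_mul _ _
      _ = ∫ q, h q.1 q.2 * p.eval q.1 ∂(μ.prod μ)
            - ∫ q, h q.1 q.2 * p.eval q.2 ∂(μ.prod μ) := by rw [hswap]; ring
      _ = ∫ q, h q.1 q.2 * (p.eval q.1 - p.eval q.2) ∂(μ.prod μ) := by
            rw [← integral_sub hG1int hG2int]; simp_rw [mul_sub]
      _ = ∫ t, ∫ s, h t s * (p.eval t - p.eval s) ∂μ ∂μ := integral_prod _ hGSint
      _ = ∫ t, ∫ s, A (t, s) *
            (if t = s then (Polynomial.derivative p).eval t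
              else (p.eval t - p.eval s) / (t - s)) ∂μ ∂μ := by simp_rw [key]
  · -- smallness
    have : ∀ q : ℝ × ℝ, |A q - 1| ^ 2 = F n q := by
      intro q
      rw [sq_abs]
      have hd := hdenn n q
      simp only [hAdef, hFdef, hεdef]
      field_simp
      ring
    simp_rw [this]
    exact hn
end

section
/- There exists a compactly supported Borel probability measure μ on ℝ with no atoms whose logarithmic energy is −∞, i.e., ∫∫ log|x−y| dμ(x) dμ(y) = −∞. -/
open MeasureTheory
open scoped ENNReal NNReal

noncomputable def myLen (n : ℕ) : ℝ := Real.exp (-(12 ^ n : ℝ))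

noncomputable def myNu (n : ℕ) : Measure ℝ :=
  (ENNReal.ofReal (myLen n))⁻¹ • volume.restrict (Set.Icc 0 (myLen n))

noncomputable def myMu : Measure ℝ :=
  Measure.sum (fun n => ((2 : ℝ≥0∞)⁻¹) ^ (n + 1) • myNu n)

lemma myLen_pos (n : ℕ) : 0 < myLen n := Real.exp_pos _

lemma myLen_le_one (n : ℕ) : myLen n ≤ 1 := by
  rw [myLen, Real.exp_le_one_iff]
  simp only [neg_nonpos]
  positivity

lemma ofReal_myLen_ne_zero (n : ℕ) : ENNReal.ofReal (myLen n) ≠ 0 := by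
  simp [ENNReal.ofReal_eq_zero, not_le, myLen_pos n]

lemma ofReal_myLen_ne_top (n : ℕ) : ENNReal.ofReal (myLen n) ≠ ⊤ := ENNReal.ofReal_ne_top

lemma myNu_Icc_self (n : ℕ) : myNu n (Set.Icc 0 (myLen n)) = 1 := by
  rw [myNu, Measure.smul_apply, Measure.restrict_apply measurableSet_Icc,
    Set.inter_self, Real.volume_Icc]
  simp only [sub_zero, smul_eq_mul]
  exact ENNReal.inv_mul_cancel (ofReal_myLen_ne_zero n) (ofReal_myLen_ne_top n)

instance myNu_prob (n : ℕ) : IsProbabilityMeasure (myNu n) := by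
  constructor
  rw [myNu, Measure.smul_apply, Measure.restrict_apply MeasurableSet.univ, Set.univ_inter,
    Real.volume_Icc]
  simp only [sub_zero, smul_eq_mul]
  exact ENNReal.inv_mul_cancel (ofReal_myLen_ne_zero n) (ofReal_myLen_ne_top n)

instance myNu_noAtoms (n : ℕ) : NullSingletonClass (myNu n) := by
  constructor
  intro x
  rw [myNu, Measure.smul_apply, Measure.restrict_apply (measurableSet_singleton x)]
  simp [measure_mono_null (Set.inter_subset_left) (measure_singleton x)]

instance myMu_prob : IsProbabilityMeasure myMu := by
  constructor
  rw [myMu, Measure.sum_apply _ MeasurableSet.univ]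
  have h1 : ∀ n : ℕ, (((2 : ℝ≥0∞)⁻¹) ^ (n + 1) • myNu n) Set.univ = ((2 : ℝ≥0∞)⁻¹) ^ (n + 1) := by
    intro n
    rw [Measure.smul_apply, measure_univ, smul_eq_mul, mul_one]
  simp_rw [h1]
  have h2 : ∀ n : ℕ, ((2 : ℝ≥0∞)⁻¹) ^ (n + 1) = 2⁻¹ * (2⁻¹) ^ n := fun n => pow_succ' _ _
  simp_rw [h2, ENNReal.tsum_mul_left, ENNReal.tsum_geometric]
  rw [ENNReal.one_sub_inv_two, inv_inv]
  exact ENNReal.inv_mul_cancel two_ne_zero ENNReal.ofNat_ne_top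

lemma my_prod_mono {μ₁ ν₁ μ₂ ν₂ : Measure ℝ} [SFinite μ₂] [SFinite ν₂]
    (h₁ : μ₁ ≤ ν₁) (h₂ : μ₂ ≤ ν₂) : μ₁.prod μ₂ ≤ ν₁.prod ν₂ := by
  rw [Measure.le_iff]
  intro s hs
  rw [Measure.prod_apply hs, Measure.prod_apply hs]
  exact lintegral_mono' h₁ fun x => Measure.le_iff'.mp h₂ _

lemma my_prod_smul (c : ℝ≥0∞) (hc : c ≠ ⊤) (ν : Measure ℝ) [SFinite ν] :
    (c • ν).prod (c • ν) = (c * c) • ν.prod ν := by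
  ext s hs
  rw [Measure.smul_apply, Measure.prod_apply hs, Measure.prod_apply hs,
    lintegral_smul_measure]
  simp_rw [Measure.smul_apply, smul_eq_mul]
  rw [lintegral_const_mul' _ _ hc, ← mul_assoc]

theorem stmt_8 : ∃ μ : Measure ℝ, IsProbabilityMeasure μ ∧ NoAtoms μ ∧
    μ (Set.Icc (0:ℝ) 1)ᶜ = 0 ∧
    ∫⁻ q : ℝ × ℝ, ENNReal.ofReal (-(Real.log |q.1 - q.2|)) ∂(μ.prod μ) = ⊤ := by
  refine ⟨myMu, myMu_prob, ?_, ?_, ?_⟩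
  · constructor
    intro x
    rw [myMu, Measure.sum_apply _ (measurableSet_singleton x)]
    simp [measure_singleton]
  · rw [myMu, Measure.sum_apply _ (measurableSet_Icc.compl)]
    have h0 : ∀ n : ℕ, myNu n (Set.Icc (0:ℝ) 1)ᶜ = 0 := by
      intro n
      rw [myNu, Measure.smul_apply, Measure.restrict_apply measurableSet_Icc.compl]
      have he : (Set.Icc (0:ℝ) 1)ᶜ ∩ Set.Icc 0 (myLen n) = ∅ := by
        rw [Set.eq_empty_iff_forall_notMem]
        rintro x ⟨hx1, hx2⟩
        exact hx1 ⟨hx2.1, hx2.2.trans (myLen_le_one n)⟩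
      simp [he]
    simp [h0]
  · set f : ℝ × ℝ → ℝ≥0∞ := fun q => ENNReal.ofReal (-(Real.log |q.1 - q.2|)) with hf
    set E := ∫⁻ q : ℝ × ℝ, f q ∂(myMu.prod myMu) with hE
    have key : ∀ n : ℕ, ((2:ℝ≥0∞)⁻¹)^(n+1) * ((2:ℝ≥0∞)⁻¹)^(n+1) * ENNReal.ofReal ((12:ℝ)^n) ≤ E := by
      intro n
      have hsq : (myNu n).prod (myNu n) ((Set.Icc 0 (myLen n) ×ˢ Set.Icc 0 (myLen n))ᶜ) = 0 := by
        rw [measure_compl (measurableSet_Icc.prod measurableSet_Icc) (measure_ne_top _ _)]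
        rw [Measure.prod_prod, myNu_Icc_self]
        simp
      have hdiag : (myNu n).prod (myNu n) {q : ℝ × ℝ | q.1 = q.2} = 0 := by
        have hm : MeasurableSet {q : ℝ × ℝ | q.1 = q.2} :=
          measurableSet_eq_fun measurable_fst measurable_snd
        rw [Measure.prod_apply hm]
        have hx : ∀ x : ℝ, myNu n (Prod.mk x ⁻¹' {q : ℝ × ℝ | q.1 = q.2}) = 0 := by
          intro x
          have : (Prod.mk x ⁻¹' {q : ℝ × ℝ | q.1 = q.2}) = {x} := by
            ext y; simp [eq_comm]
          rw [this]; exact measure_singleton x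
        simp [hx]
      have hae : ∀ᵐ q ∂((myNu n).prod (myNu n)), ENNReal.ofReal ((12:ℝ)^n) ≤ f q := by
        filter_upwards [compl_mem_ae_iff.mpr hsq, compl_mem_ae_iff.mpr hdiag] with q hq1 hq2
        simp only [Set.mem_compl_iff, not_not] at hq1
        have hne : q.1 ≠ q.2 := hq2
        have h1 : |q.1 - q.2| ≤ myLen n := by
          rw [abs_sub_le_iff]
          have h1 := hq1.1.1; have h2 := hq1.1.2
          have h3 := hq1.2.1; have h4 := hq1.2.2
          constructor <;> linarith
        have h0 : 0 < |q.1 - q.2| := abs_pos.mpr (sub_ne_zero.mpr hne)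
        have hlog : Real.log |q.1 - q.2| ≤ -(12:ℝ)^n := by
          calc Real.log |q.1 - q.2| ≤ Real.log (myLen n) := Real.log_le_log h0 h1
            _ = -(12:ℝ)^n := Real.log_exp _
        exact ENNReal.ofReal_le_ofReal (by linarith)
      have hlow : ENNReal.ofReal ((12:ℝ)^n) ≤ ∫⁻ q, f q ∂((myNu n).prod (myNu n)) := by
        calc ENNReal.ofReal ((12:ℝ)^n)
            = ∫⁻ _, ENNReal.ofReal ((12:ℝ)^n) ∂((myNu n).prod (myNu n)) := by simp
          _ ≤ ∫⁻ q, f q ∂((myNu n).prod (myNu n)) := lintegral_mono_ae hae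
      have hle : (((2:ℝ≥0∞)⁻¹)^(n+1) • myNu n).prod (((2:ℝ≥0∞)⁻¹)^(n+1) • myNu n)
          ≤ myMu.prod myMu := my_prod_mono (Measure.le_sum _ n) (Measure.le_sum _ n)
      have hct : ((2:ℝ≥0∞)⁻¹)^(n+1) ≠ ⊤ := by
        apply ENNReal.pow_ne_top
        simp
      calc ((2:ℝ≥0∞)⁻¹)^(n+1) * ((2:ℝ≥0∞)⁻¹)^(n+1) * ENNReal.ofReal ((12:ℝ)^n)
          ≤ ((2:ℝ≥0∞)⁻¹)^(n+1) * ((2:ℝ≥0∞)⁻¹)^(n+1) * ∫⁻ q, f q ∂((myNu n).prod (myNu n)) := by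
            gcongr
        _ = ∫⁻ q, f q ∂((((2:ℝ≥0∞)⁻¹)^(n+1) • myNu n).prod (((2:ℝ≥0∞)⁻¹)^(n+1) • myNu n)) := by
            rw [my_prod_smul _ hct, lintegral_smul_measure, smul_eq_mul]
        _ ≤ E := lintegral_mono' hle le_rfl
    apply ENNReal.eq_top_of_forall_nnreal_le
    intro r
    obtain ⟨m, hm⟩ : ∃ m : ℕ, (4 * r : ℝ) < 3 ^ m := pow_unbounded_of_one_lt _ (by norm_num)
    refine le_trans ?_ (key m)
    have htwo : ((2:ℝ≥0∞)⁻¹)^(m+1) = ENNReal.ofReal (((2:ℝ)⁻¹)^(m+1)) := by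
      rw [ENNReal.ofReal_pow (by norm_num)]
      congr 1
      rw [ENNReal.ofReal_inv_of_pos (by norm_num)]
      norm_num
    have hrw : ((2:ℝ≥0∞)⁻¹)^(m+1) * ((2:ℝ≥0∞)⁻¹)^(m+1) * ENNReal.ofReal ((12:ℝ)^m)
        = ENNReal.ofReal (((2:ℝ)⁻¹)^(m+1) * ((2:ℝ)⁻¹)^(m+1) * (12:ℝ)^m) := by
      rw [htwo, ENNReal.ofReal_mul (by positivity), ENNReal.ofReal_mul (by positivity)]
    rw [hrw, ← ENNReal.ofReal_coe_nnreal]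
    apply ENNReal.ofReal_le_ofReal
    have h12 : ((2:ℝ)⁻¹)^(m+1) * ((2:ℝ)⁻¹)^(m+1) * (12:ℝ)^m = 3^m / 4 := by
      rw [show ((2:ℝ)⁻¹)^(m+1) * ((2:ℝ)⁻¹)^(m+1) = ((4:ℝ)⁻¹)^(m+1) by rw [← mul_pow]; norm_num,
        show (12:ℝ)^m = 3^m * 4^m by rw [← mul_pow]; norm_num,
        pow_succ, inv_pow]
      have h4 : (4:ℝ)^m ≠ 0 := by positivity
      field_simp
    rw [h12]
    linarith
end

section
/- Let I_n ⊆ [0,1] be pairwise disjoint intervals with Lebesgue measure λ(I_n) < e^{−12ⁿ}, and let f(t) = Σ_{n=1}^∞ (2ⁿ λ(I_n))^{−1} χ_{I_n}(t). Then f is a nonnegative integrable function with ∫_ℝ f dλ = 1, and the measure μ with density f satisfies Σ_{n=1}^∞ ∫∫_{I_n × I_n} log|x−y| dμ(x) dμ(y) ≤ Σ_{n=1}^∞ 4^{−n} log(e^{−12ⁿ}) = −∞. -/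
open MeasureTheory ENNReal

/- The explicit construction (Example B.3): disjoint intervals `I n ⊆ [0,1]` with
`λ(I n) < e^{−12^(n+1)}` (indexing from 0 corresponds to the paper's `n ≥ 1`), and
`f = Σ (2^(n+1) λ(I n))⁻¹ χ_{I n}`. Then `f` is a nonnegative density with total mass 1,
and the logarithmic energy of `μ = f dλ` diverges:
`Σ_n ∫∫_{I n × I n} log|x−y| dμ dμ ≤ Σ_n 4^{−n} log(e^{−12^n}) = −∞`,
expressed via the sum of lower integrals of `−log|x−y|` being infinite. -/
theorem stmt_9 (I : ℕ → Set ℝ)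
    (hIint : ∀ n, ∃ a b : ℝ, a < b ∧ I n = Set.Icc a b)
    (hIsub : ∀ n, I n ⊆ Set.Icc (0:ℝ) 1)
    (hdisj : Pairwise (Function.onFun Disjoint I))
    (hsmall : ∀ n, volume (I n) < ENNReal.ofReal (Real.exp (-(12 ^ (n + 1) : ℝ))))
    (f : ℝ → ℝ)
    (hf : ∀ t, f t = ∑' n : ℕ,
      Set.indicator (I n) (fun _ => ((2:ℝ) ^ (n + 1) * (volume (I n)).toReal)⁻¹) t)
    (μ : Measure ℝ) (hμ : μ = volume.withDensity fun t => ENNReal.ofReal (f t)) :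
    (∀ t, 0 ≤ f t) ∧ Integrable f volume ∧ (∫ t, f t) = 1 ∧
      ∑' n : ℕ, ∫⁻ q in (I n) ×ˢ (I n),
        ENNReal.ofReal (-(Real.log |q.1 - q.2|)) ∂(μ.prod μ) = ⊤ := by
  have hv0 : ∀ n, volume (I n) ≠ 0 := by
    intro n; obtain ⟨a, b, hab, hI⟩ := hIint n
    rw [hI, Real.volume_Icc]
    simp only [ne_eq, ENNReal.ofReal_eq_zero, not_le]
    linarith
  have hvt : ∀ n, volume (I n) ≠ ⊤ := by
    intro n; obtain ⟨a, b, hab, hI⟩ := hIint n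
    rw [hI, Real.volume_Icc]; exact ENNReal.ofReal_ne_top
  have hvr : ∀ n, 0 < (volume (I n)).toReal := fun n =>
    ENNReal.toReal_pos (hv0 n) (hvt n)
  set c : ℕ → ℝ := fun n => ((2:ℝ) ^ (n + 1) * (volume (I n)).toReal)⁻¹ with hc
  have hcpos : ∀ n, 0 < c n := fun n =>
    inv_pos.2 (mul_pos (pow_pos two_pos _) (hvr n))
  set g : ℝ → ℝ≥0∞ := fun t => ∑' n, (I n).indicator (fun _ => ENNReal.ofReal (c n)) t with hg
  have hImeas : ∀ n, MeasurableSet (I n) := by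
    intro n; obtain ⟨a, b, _, hI⟩ := hIint n; rw [hI]; exact measurableSet_Icc
  have hgmeas : Measurable g :=
    Measurable.ennreal_tsum fun n => measurable_const.indicator (hImeas n)
  have key : ∀ t, 0 ≤ f t ∧ ENNReal.ofReal (f t) = g t := by
    intro t
    by_cases h : ∃ m, t ∈ I m
    · obtain ⟨m, hm⟩ := h
      have hne : ∀ n, n ≠ m → t ∉ I n := fun n hn ht =>
        Set.disjoint_left.1 (hdisj hn) ht hm
      have h1 : f t = c m := by
        rw [hf t]
        exact (tsum_eq_single m fun n hn =>
          Set.indicator_of_notMem (hne n hn) _).trans (Set.indicator_of_mem hm _)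
      have h2 : g t = ENNReal.ofReal (c m) :=
        (tsum_eq_single m fun n hn =>
          Set.indicator_of_notMem (hne n hn) _).trans (Set.indicator_of_mem hm _)
      rw [h1, h2]
      exact ⟨le_of_lt (hcpos m), rfl⟩
    · push_neg at h
      have hz : ∀ n, (I n).indicator
          (fun _ => ((2:ℝ) ^ (n + 1) * (volume (I n)).toReal)⁻¹) t = 0 :=
        fun n => Set.indicator_of_notMem (h n) _
      have hz' : ∀ n, (I n).indicator (fun _ => ENNReal.ofReal (c n)) t = 0 :=
        fun n => Set.indicator_of_notMem (h n) _
      have h1 : f t = 0 := by rw [hf t]; exact (tsum_congr hz).trans tsum_zero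
      have h2 : g t = 0 := (tsum_congr hz').trans tsum_zero
      rw [h1, h2]; simp
  have hfnonneg : ∀ t, 0 ≤ f t := fun t => (key t).1
  have hft : ∀ t, ENNReal.ofReal (f t) = g t := fun t => (key t).2
  have hfg : ∀ t, f t = (g t).toReal := fun t => by
    rw [← hft t, ENNReal.toReal_ofReal (hfnonneg t)]
  have hfmeas : Measurable f := by
    rw [funext hfg]; exact hgmeas.ennreal_toReal
  -- the key product computation
  have hprod : ∀ n, ENNReal.ofReal (c n) * volume (I n)
      = ENNReal.ofReal ((2:ℝ)⁻¹ ^ (n + 1)) := by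
    intro n
    rw [← ENNReal.ofReal_toReal (hvt n),
        ← ENNReal.ofReal_mul (le_of_lt (hcpos n))]
    congr 1
    have h2 : (2:ℝ) ^ (n + 1) ≠ 0 := by positivity
    have hv := ne_of_gt (hvr n)
    rw [hc]
    field_simp
    rw [← mul_pow]; norm_num
  have hgeo : ∑' n : ℕ, ENNReal.ofReal ((2:ℝ)⁻¹ ^ (n + 1)) = 1 := by
    have hconv : ∀ n : ℕ, ENNReal.ofReal ((2:ℝ)⁻¹ ^ (n + 1))
        = (2⁻¹ : ℝ≥0∞) ^ n * 2⁻¹ := by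
      intro n
      rw [ENNReal.ofReal_pow (by norm_num), ENNReal.ofReal_inv_of_pos (by norm_num)]
      norm_num [pow_succ]
    simp_rw [hconv]
    rw [ENNReal.tsum_mul_right, ENNReal.tsum_geometric, ENNReal.one_sub_inv_two,
        inv_inv]
    exact ENNReal.mul_inv_cancel two_ne_zero ENNReal.ofNat_ne_top
  have hint_g : ∫⁻ t, g t = 1 := by
    rw [hg]
    rw [lintegral_tsum (fun n => (measurable_const.indicator (hImeas n)).aemeasurable)]
    have hterm : ∀ n, ∫⁻ t, (I n).indicator (fun _ => ENNReal.ofReal (c n)) t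
        = ENNReal.ofReal ((2:ℝ)⁻¹ ^ (n + 1)) := by
      intro n
      rw [lintegral_indicator (hImeas n), setLIntegral_const]
      exact hprod n
    simp_rw [hterm]
    exact hgeo
  have hlin : ∫⁻ t, ENNReal.ofReal (f t) = 1 := by
    simp_rw [hft]; exact hint_g
  have hintf : Integrable f volume := by
    refine ⟨hfmeas.aestronglyMeasurable, ?_⟩
    rw [hasFiniteIntegral_iff_ofReal (Filter.Eventually.of_forall hfnonneg), hlin]
    exact ENNReal.one_lt_top
  have hint : (∫ t, f t) = 1 := by
    rw [integral_eq_lintegral_of_nonneg_ae (Filter.Eventually.of_forall hfnonneg)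
      hfmeas.aestronglyMeasurable, hlin]
    simp
  -- measure of I n under μ
  have hμI : ∀ n, μ (I n) = ENNReal.ofReal ((2:ℝ)⁻¹ ^ (n + 1)) := by
    intro n
    rw [hμ, withDensity_apply _ (hImeas n)]
    have hcong : ∀ t ∈ I n, ENNReal.ofReal (f t) = ENNReal.ofReal (c n) := by
      intro t ht
      rw [hft t]
      exact (tsum_eq_single n fun m hm => Set.indicator_of_notMem
        (fun htm => Set.disjoint_left.1 (hdisj hm) htm ht) _).trans
        (Set.indicator_of_mem ht _)
    rw [setLIntegral_congr_fun (hImeas n) hcong,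
        setLIntegral_const]
    exact hprod n
  haveI : IsFiniteMeasure μ := by
    constructor
    rw [hμ, withDensity_apply _ MeasurableSet.univ, Measure.restrict_univ, hlin]
    exact ENNReal.one_lt_top
  have hμpt : ∀ x : ℝ, μ {x} = 0 := by
    intro x
    rw [hμ]
    exact withDensity_absolutelyContinuous volume _ (measure_singleton x)
  have hDm : MeasurableSet {p : ℝ × ℝ | p.1 = p.2} :=
    (isClosed_eq continuous_fst continuous_snd).measurableSet
  have hD : (μ.prod μ) {p : ℝ × ℝ | p.1 = p.2} = 0 := by
    rw [Measure.prod_apply hDm]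
    simp [hμpt]
  have hmeasint : Measurable fun q : ℝ × ℝ =>
      ENNReal.ofReal (-(Real.log |q.1 - q.2|)) :=
    ((measurable_fst.sub measurable_snd).abs.log.neg).ennreal_ofReal
  have hterm1 : ∀ n, (1:ℝ≥0∞) ≤ ∫⁻ q in (I n) ×ˢ (I n),
      ENNReal.ofReal (-(Real.log |q.1 - q.2|)) ∂(μ.prod μ) := by
    intro n
    obtain ⟨a, b, hab, hI⟩ := hIint n
    set A := ((I n) ×ˢ (I n)) \ {p : ℝ × ℝ | p.1 = p.2} with hA
    have hba : b - a < Real.exp (-(12 ^ (n + 1) : ℝ)) := by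
      have h := hsmall n
      rw [hI, Real.volume_Icc] at h
      exact (ENNReal.ofReal_lt_ofReal_iff (Real.exp_pos _)).1 h
    have hsub : ∀ q ∈ A, ENNReal.ofReal ((12:ℝ) ^ (n + 1))
        ≤ ENNReal.ofReal (-(Real.log |q.1 - q.2|)) := by
      rintro q ⟨⟨h1, h2⟩, hne⟩
      have hne' : q.1 ≠ q.2 := hne
      have habs : 0 < |q.1 - q.2| := abs_pos.2 (sub_ne_zero.2 hne')
      rw [hI] at h1 h2
      have hle : |q.1 - q.2| ≤ b - a :=
        abs_sub_le_iff.2 ⟨by linarith [h1.1, h1.2, h2.1, h2.2],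
          by linarith [h1.1, h1.2, h2.1, h2.2]⟩
      have hlog : Real.log |q.1 - q.2| < -(12 ^ (n + 1) : ℝ) := by
        calc Real.log |q.1 - q.2| ≤ Real.log (b - a) := Real.log_le_log habs hle
          _ < Real.log (Real.exp (-(12 ^ (n + 1) : ℝ))) :=
              Real.log_lt_log (by linarith) hba
          _ = -(12 ^ (n + 1) : ℝ) := Real.log_exp _
      exact ENNReal.ofReal_le_ofReal (by push_cast at hlog ⊢; linarith)
    calc (1:ℝ≥0∞)
        ≤ ENNReal.ofReal ((12:ℝ) ^ (n + 1)) * (μ.prod μ) A := by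
          rw [hA, measure_diff_null hD, Measure.prod_prod, hμI n,
              ← ENNReal.ofReal_mul (by positivity),
              ← ENNReal.ofReal_mul (by positivity)]
          have heq : (12:ℝ) ^ (n + 1) * ((2:ℝ)⁻¹ ^ (n + 1) * (2:ℝ)⁻¹ ^ (n + 1))
              = 3 ^ (n + 1) := by
            rw [← mul_pow, ← mul_pow]; norm_num
          rw [heq, ← ENNReal.ofReal_one]
          exact ENNReal.ofReal_le_ofReal (one_le_pow₀ (by norm_num))
      _ = ∫⁻ _ in A, ENNReal.ofReal ((12:ℝ) ^ (n + 1)) ∂(μ.prod μ) := by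
          rw [setLIntegral_const, mul_comm]
      _ ≤ ∫⁻ q in A, ENNReal.ofReal (-(Real.log |q.1 - q.2|)) ∂(μ.prod μ) :=
          setLIntegral_mono hmeasint hsub
      _ ≤ ∫⁻ q in (I n) ×ˢ (I n),
            ENNReal.ofReal (-(Real.log |q.1 - q.2|)) ∂(μ.prod μ) :=
          lintegral_mono_set Set.diff_subset
  refine ⟨hfnonneg, hintf, hint, ?_⟩
  rw [eq_top_iff]
  calc (⊤:ℝ≥0∞) = ∑' _ : ℕ, (1:ℝ≥0∞) :=
        (ENNReal.tsum_const_eq_top_of_ne_zero one_ne_zero).symm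
    _ ≤ _ := ENNReal.tsum_le_tsum hterm1
end

section
/- Let μ = (1/2)σ + (1/2)δ_a where σ is the standard semicircle law on [−2,2] (density (1/(2π))√(4−t²)) and |a| > 2. Define g_ε(t) = 2∫ (t−s)/((t−s)²+ε²) dμ(s). Then g_ε converges in L²(μ) as ε → 0⁺. -/
open MeasureTheory
open scoped ENNReal
open Set Filter
open scoped NNReal Topology

/-- The semicircle density. -/
noncomputable def scF (s : ℝ) : ℝ := Real.sqrt (4 - s ^ 2) / (2 * Real.pi)

/-- The regularized Hilbert kernel. -/
noncomputable def scK (ε u : ℝ) : ℝ := u / (u ^ 2 + ε ^ 2)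

lemma scF_nonneg (s : ℝ) : 0 ≤ scF s :=
  div_nonneg (Real.sqrt_nonneg _) (by positivity)

lemma scF_le (s : ℝ) : scF s ≤ 1 / Real.pi := by
  have h1 : Real.sqrt (4 - s ^ 2) ≤ 2 := by
    rw [show (2:ℝ) = Real.sqrt 4 by
      rw [show (4:ℝ) = 2^2 by norm_num, Real.sqrt_sq (by norm_num)]]
    exact Real.sqrt_le_sqrt (by nlinarith [sq_nonneg s])
  rw [scF, div_le_div_iff₀ (by positivity) Real.pi_pos, one_mul]
  nlinarith [Real.pi_pos]

lemma scF_eq_zero {s : ℝ} (h : 2 ≤ |s|) : scF s = 0 := by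
  have : 4 - s ^ 2 ≤ 0 := by
    have := sq_abs s
    nlinarith [abs_nonneg s]
  rw [scF, Real.sqrt_eq_zero_of_nonpos this, zero_div]

lemma scF_cont : Continuous scF := by
  unfold scF; fun_prop

lemma sqrt_le_sqrt_add_sqrt {A B : ℝ} (h : A ≤ B) :
    Real.sqrt B ≤ Real.sqrt A + Real.sqrt (B - A) := by
  have h1 : B ≤ (Real.sqrt A + Real.sqrt (B - A)) ^ 2 := by
    have hA : A ≤ Real.sqrt A ^ 2 := by
      rcases le_or_gt 0 A with hA | hA
      · rw [Real.sq_sqrt hA]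
      · nlinarith [Real.sqrt_nonneg A]
    have hBA : (Real.sqrt (B - A)) ^ 2 = B - A := Real.sq_sqrt (by linarith)
    nlinarith [Real.sqrt_nonneg A, Real.sqrt_nonneg (B - A)]
  calc Real.sqrt B ≤ Real.sqrt ((Real.sqrt A + Real.sqrt (B - A)) ^ 2) :=
        Real.sqrt_le_sqrt h1
    _ = Real.sqrt A + Real.sqrt (B - A) := by
        rw [Real.sqrt_sq (by positivity)]

lemma abs_sqrt_sub_sqrt_le (A B : ℝ) :
    |Real.sqrt A - Real.sqrt B| ≤ Real.sqrt |A - B| := by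
  wlog h : B ≤ A generalizing A B
  · rw [abs_sub_comm, abs_sub_comm A B]; exact this B A (le_of_not_ge h)
  rw [abs_of_nonneg (by linarith : (0:ℝ) ≤ A - B),
    abs_of_nonneg (sub_nonneg.2 (Real.sqrt_le_sqrt h))]
  have := sqrt_le_sqrt_add_sqrt h
  linarith

lemma abs_scF_sub (x y : ℝ) :
    |scF x - scF y| ≤ Real.sqrt |x ^ 2 - y ^ 2| / (2 * Real.pi) := by
  rw [scF, scF, div_sub_div_same, abs_div, abs_of_pos (by positivity : (0:ℝ) < 2 * Real.pi)]
  gcongr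
  calc |Real.sqrt (4 - x ^ 2) - Real.sqrt (4 - y ^ 2)|
      ≤ Real.sqrt |(4 - x ^ 2) - (4 - y ^ 2)| := abs_sqrt_sub_sqrt_le _ _
    _ = Real.sqrt |x ^ 2 - y ^ 2| := by rw [show (4 - x ^ 2) - (4 - y ^ 2) = -(x ^ 2 - y ^ 2) by ring, abs_neg]

lemma scF_diff_bound {t : ℝ} (ht : |t| ≤ 2) {u : ℝ} (hu : 0 < u) :
    |scF (t - u) - scF (t + u)| ≤ Real.sqrt 8 * Real.sqrt u / (2 * Real.pi) := by
  calc |scF (t - u) - scF (t + u)|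
      ≤ Real.sqrt |(t - u) ^ 2 - (t + u) ^ 2| / (2 * Real.pi) := abs_scF_sub _ _
    _ ≤ Real.sqrt 8 * Real.sqrt u / (2 * Real.pi) := by
        gcongr
        rw [← Real.sqrt_mul (by norm_num)]
        apply Real.sqrt_le_sqrt
        rw [show (t - u) ^ 2 - (t + u) ^ 2 = -(4 * t * u) by ring, abs_neg]
        calc |4 * t * u| = 4 * |t| * u := by
              rw [abs_mul, abs_mul, abs_of_nonneg hu.le]; norm_num
          _ ≤ 8 * u := by nlinarith

lemma scF_diff_zero {t u : ℝ} (ht : |t| ≤ 2) (hu : 4 ≤ u) :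
    scF (t - u) - scF (t + u) = 0 := by
  have h1 := abs_le.1 ht
  rw [scF_eq_zero (by rw [abs_sub_comm, abs_of_nonneg (by linarith)]; linarith),
    scF_eq_zero (by rw [abs_of_nonneg (by linarith)]; linarith), sub_zero]

lemma scK_abs_le {ε : ℝ} (hε : ε ≠ 0) (u : ℝ) : |scK ε u| ≤ 1 / (2 * |ε|) := by
  rw [scK, abs_div, abs_of_nonneg (by positivity : (0:ℝ) ≤ u ^ 2 + ε ^ 2),
    div_le_div_iff₀ (by positivity) (by positivity)]
  nlinarith [sq_nonneg (|u| - |ε|), sq_abs u, sq_abs ε, abs_nonneg u, abs_nonneg ε]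

lemma scK_abs_le' (ε : ℝ) {u : ℝ} (hu : u ≠ 0) : |scK ε u| ≤ 1 / |u| := by
  rw [scK, abs_div, abs_of_nonneg (by positivity : (0:ℝ) ≤ u ^ 2 + ε ^ 2),
    div_le_div_iff₀ (by positivity) (abs_pos.2 hu)]
  nlinarith [sq_abs u, sq_nonneg ε, abs_nonneg u, abs_pos.2 hu]

lemma scK_cont {ε : ℝ} (hε : ε ≠ 0) : Continuous (scK ε) := by
  apply Continuous.div continuous_id (by fun_prop)
  intro u
  positivity

lemma scK_tendsto {u : ℝ} (hu : u ≠ 0) :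
    Tendsto (fun ε : ℝ => scK ε u) (𝓝[>] 0) (𝓝 (scK 0 u)) := by
  apply Tendsto.mono_left ?_ nhdsWithin_le_nhds
  have : ContinuousAt (fun ε : ℝ => scK ε u) 0 := by
    apply ContinuousAt.div continuousAt_const (by fun_prop)
    simp
    positivity
  exact this

/-- Dominating function for the symmetrized integrals. -/
noncomputable def scD (u : ℝ) : ℝ :=
  Set.indicator (Set.Ioc (0:ℝ) 4) (fun u => Real.sqrt 8 / (2 * Real.pi) * (1 / Real.sqrt u)) u

lemma scD_nonneg (u : ℝ) : 0 ≤ scD u := by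
  unfold scD
  apply Set.indicator_nonneg
  intro x _
  positivity

lemma scD_integrable : Integrable scD (volume.restrict (Set.Ioi (0:ℝ))) := by
  have h0 : IntegrableOn (fun u : ℝ => u ^ (-(1/2) : ℝ)) (Set.Ioc (0:ℝ) 4) := by
    have := (intervalIntegral.intervalIntegrable_rpow' (a := 0) (b := 4)
      (r := -(1/2)) (by norm_num))
    rwa [intervalIntegrable_iff, Set.uIoc_of_le (by norm_num)] at this
  have h1 : IntegrableOn (fun u : ℝ => Real.sqrt 8 / (2 * Real.pi) * (1 / Real.sqrt u))
      (Set.Ioc (0:ℝ) 4) := by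
    apply Integrable.congr (h0.const_mul (Real.sqrt 8 / (2 * Real.pi)))
    apply (ae_restrict_iff' measurableSet_Ioc).2 (ae_of_all _ ?_)
    intro u hu
    show _ * _ ^ (-(1/2):ℝ) = _
    rw [Real.rpow_neg hu.1.le, ← Real.sqrt_eq_rpow]; simp
  exact ((integrable_indicator_iff measurableSet_Ioc).2 h1).restrict

lemma key_bound {t : ℝ} (ht : |t| ≤ 2) (ε : ℝ) {u : ℝ} (hu : 0 < u) :
    ‖scK ε u * (scF (t - u) - scF (t + u))‖ ≤ scD u := by
  rcases le_or_gt u 4 with h4 | h4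
  · have hD : scD u = Real.sqrt 8 / (2 * Real.pi) * (1 / Real.sqrt u) := by
      rw [scD, Set.indicator_of_mem (Set.mem_Ioc.2 ⟨hu, h4⟩)]
    rw [hD, Real.norm_eq_abs, abs_mul]
    have h1 : |scK ε u| ≤ 1 / u := by
      have := scK_abs_le' ε hu.ne'
      rwa [abs_of_pos hu] at this
    calc |scK ε u| * |scF (t - u) - scF (t + u)|
        ≤ (1 / u) * (Real.sqrt 8 * Real.sqrt u / (2 * Real.pi)) := by
          apply mul_le_mul h1 (scF_diff_bound ht hu) (abs_nonneg _) (by positivity)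
      _ = Real.sqrt 8 / (2 * Real.pi) * (Real.sqrt u / u) := by ring
      _ = Real.sqrt 8 / (2 * Real.pi) * (1 / Real.sqrt u) := by
          rw [Real.sqrt_div_self']
  · rw [scF_diff_zero ht h4.le, mul_zero, norm_zero]
    exact scD_nonneg u

lemma integrable_scF_mul_scK_sub (t : ℝ) {ε : ℝ} (hε : ε ≠ 0) :
    Integrable (fun u => scF (t - u) * scK ε u) := by
  have hm : AEStronglyMeasurable (fun u => scF (t - u) * scK ε u) volume := by
    apply Continuous.aestronglyMeasurable
    exact (scF_cont.comp (continuous_const.sub continuous_id)).mul (scK_cont hε)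
  have hbnd : Integrable (Set.indicator (Set.Icc (t-2) (t+2))
      ((fun _ => (1 / Real.pi) * (1 / (2 * |ε|))) : ℝ → ℝ)) volume :=
    (integrable_indicator_iff measurableSet_Icc).2
      (integrableOn_const measure_Icc_lt_top.ne)
  apply Integrable.mono' hbnd hm
  apply ae_of_all
  intro u
  by_cases hmem : u ∈ Set.Icc (t-2) (t+2)
  · rw [Set.indicator_of_mem hmem, Real.norm_eq_abs, abs_mul]
    exact mul_le_mul (by rw [abs_of_nonneg (scF_nonneg _)]; exact scF_le _)
      (scK_abs_le hε u) (abs_nonneg _) (by positivity)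
  · rw [Set.indicator_of_notMem hmem]
    have h0 : scF (t - u) = 0 := by
      apply scF_eq_zero
      rw [Set.mem_Icc, not_and_or, not_le, not_le] at hmem
      rcases hmem with h | h
      · rw [abs_of_nonneg (by linarith)]; linarith
      · rw [abs_of_nonpos (by linarith)]; linarith
    rw [h0, zero_mul, norm_zero]

lemma integrable_scF_mul_scK_add (t : ℝ) {ε : ℝ} (hε : ε ≠ 0) :
    Integrable (fun u => scF (t + u) * scK ε u) := by
  have hm : AEStronglyMeasurable (fun u => scF (t + u) * scK ε u) volume := by
    apply Continuous.aestronglyMeasurable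
    exact (scF_cont.comp (continuous_const.add continuous_id)).mul (scK_cont hε)
  have hbnd : Integrable (Set.indicator (Set.Icc (-2-t) (2-t))
      ((fun _ => (1 / Real.pi) * (1 / (2 * |ε|))) : ℝ → ℝ)) volume :=
    (integrable_indicator_iff measurableSet_Icc).2
      (integrableOn_const measure_Icc_lt_top.ne)
  apply Integrable.mono' hbnd hm
  apply ae_of_all
  intro u
  by_cases hmem : u ∈ Set.Icc (-2-t) (2-t)
  · rw [Set.indicator_of_mem hmem, Real.norm_eq_abs, abs_mul]
    exact mul_le_mul (by rw [abs_of_nonneg (scF_nonneg _)]; exact scF_le _)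
      (scK_abs_le hε u) (abs_nonneg _) (by positivity)
  · rw [Set.indicator_of_notMem hmem]
    have h0 : scF (t + u) = 0 := by
      apply scF_eq_zero
      rw [Set.mem_Icc, not_and_or, not_le, not_le] at hmem
      rcases hmem with h | h
      · rw [abs_of_nonpos (by linarith)]; linarith
      · rw [abs_of_nonneg (by linarith)]; linarith
    rw [h0, zero_mul, norm_zero]

lemma rep (t : ℝ) {ε : ℝ} (hε : ε ≠ 0) :
    ∫ s, scF s * scK ε (t - s) =
      ∫ u in Set.Ioi (0:ℝ), scK ε u * (scF (t - u) - scF (t + u)) := by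
  set F : ℝ → ℝ := fun u => scF (t - u) * scK ε u with hF
  have hFint : Integrable F := integrable_scF_mul_scK_sub t hε
  have step1 : ∫ s, scF s * scK ε (t - s) = ∫ u, F u := by
    symm
    calc ∫ u, F u = ∫ u, (fun x => scF (t + x) * scK ε (t - (t + x))) (-u) := by
          congr 1; funext u
          simp only [hF]
          rw [show t - (t + -u) = u from by ring, show t + -u = t - u from by ring]
      _ = ∫ x, scF (t + x) * scK ε (t - (t + x)) :=
          integral_neg_eq_self (fun x => scF (t + x) * scK ε (t - (t + x))) volume
      _ = ∫ s, scF s * scK ε (t - s) :=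
          integral_add_left_eq_self (fun s => scF s * scK ε (t - s)) t
  rw [step1, ← intervalIntegral.integral_Iic_add_Ioi (b := (0:ℝ))
    hFint.integrableOn hFint.integrableOn]
  have step2 : ∫ u in Set.Iic (0:ℝ), F u = ∫ u in Set.Ioi (0:ℝ), -(scF (t + u) * scK ε u) := by
    have := integral_comp_neg_Iic (0:ℝ) (fun x => F (-x))
    simp only [neg_neg, neg_zero] at this
    rw [this]
    congr 1; funext u
    simp only [hF, scK]
    rw [show t - -u = t + u from by ring]
    ring_nf
  rw [step2]
  have h3 : ∫ u in Set.Ioi (0:ℝ), (-(scF (t + u) * scK ε u) + F u)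
      = ∫ u in Set.Ioi (0:ℝ), scK ε u * (scF (t - u) - scF (t + u)) := by
    congr 1; funext u; simp only [hF]; ring
  rw [← h3]
  exact (integral_add ((integrable_scF_mul_scK_add t hε).neg.integrableOn)
    hFint.integrableOn).symm

lemma indicator_eq_scF :
    ∀ t : ℝ, Set.indicator (Set.Icc (-2:ℝ) 2)
      (fun t => Real.sqrt (4 - t ^ 2) / (2 * Real.pi)) t = scF t := by
  intro t
  by_cases hmem : t ∈ Set.Icc (-2:ℝ) 2
  · rw [Set.indicator_of_mem hmem]; rfl
  · rw [Set.indicator_of_notMem hmem]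
    symm; apply scF_eq_zero
    rw [Set.mem_Icc, not_and_or, not_le, not_le] at hmem
    rcases hmem with h | h
    · rw [abs_of_nonpos (by linarith)]; linarith
    · rw [abs_of_nonneg (by linarith)]; linarith

section Sigma

variable {σ : Measure ℝ}
  (hσ : σ = volume.withDensity fun t =>
    ENNReal.ofReal (Set.indicator (Set.Icc (-2:ℝ) 2)
      (fun t => Real.sqrt (4 - t ^ 2) / (2 * Real.pi)) t))

include hσ

lemma sigma_int (g : ℝ → ℝ) : ∫ s, g s ∂σ = ∫ s, scF s * g s := by
  have hd : (fun t => ENNReal.ofReal (Set.indicator (Set.Icc (-2:ℝ) 2)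
      (fun t => Real.sqrt (4 - t ^ 2) / (2 * Real.pi)) t))
      = fun t => ((Real.toNNReal (scF t) : ℝ≥0) : ℝ≥0∞) := by
    funext t; rw [indicator_eq_scF t]; rfl
  rw [hσ, hd, integral_withDensity_eq_integral_smul
    (scF_cont.measurable.real_toNNReal) g]
  congr 1; funext s
  rw [NNReal.smul_def, Real.coe_toNNReal _ (scF_nonneg s), smul_eq_mul]

lemma sigma_finite' : IsFiniteMeasure σ := by
  constructor
  rw [hσ, withDensity_apply _ MeasurableSet.univ, Measure.restrict_univ]
  calc ∫⁻ t, ENNReal.ofReal (Set.indicator (Set.Icc (-2:ℝ) 2)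
        (fun t => Real.sqrt (4 - t ^ 2) / (2 * Real.pi)) t)
      ≤ ∫⁻ t, Set.indicator (Set.Icc (-2:ℝ) 2)
          (fun _ => ENNReal.ofReal (1 / Real.pi)) t := by
        apply lintegral_mono
        intro t
        by_cases hmem : t ∈ Set.Icc (-2:ℝ) 2
        · simp only [Set.indicator_of_mem hmem]
          exact ENNReal.ofReal_le_ofReal (scF_le t)
        · simp only [Set.indicator_of_notMem hmem]
          simp
    _ = ENNReal.ofReal (1 / Real.pi) * volume (Set.Icc (-2:ℝ) 2) :=
        lintegral_indicator_const measurableSet_Icc _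
    _ < ⊤ := ENNReal.mul_lt_top ENNReal.ofReal_lt_top measure_Icc_lt_top

lemma sigma_Icc_ae : ∀ᵐ t ∂σ, t ∈ Set.Icc (-2:ℝ) 2 := by
  rw [ae_iff, hσ]
  rw [show {t : ℝ | ¬ t ∈ Set.Icc (-2:ℝ) 2} = (Set.Icc (-2:ℝ) 2)ᶜ from rfl,
    withDensity_apply _ measurableSet_Icc.compl]
  calc ∫⁻ t in (Set.Icc (-2:ℝ) 2)ᶜ, ENNReal.ofReal (Set.indicator (Set.Icc (-2:ℝ) 2)
        (fun t => Real.sqrt (4 - t ^ 2) / (2 * Real.pi)) t)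
      = ∫⁻ _ in (Set.Icc (-2:ℝ) 2)ᶜ, 0 := by
        apply setLIntegral_congr_fun measurableSet_Icc.compl
        intro t ht
        dsimp only
        rw [Set.indicator_of_notMem ht]
        simp
    _ = 0 := lintegral_zero
  
end Sigma

lemma scF_diff_cont (t : ℝ) : Continuous (fun u : ℝ => scF (t - u) - scF (t + u)) :=
  (scF_cont.comp (continuous_const.sub continuous_id)).sub
    (scF_cont.comp (continuous_const.add continuous_id))

lemma tendsto_sym {t : ℝ} (ht : |t| ≤ 2) :
    Filter.Tendsto (fun ε : ℝ => ∫ u in Set.Ioi (0:ℝ), scK ε u * (scF (t - u) - scF (t + u)))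
      (𝓝[>] 0) (𝓝 (∫ u in Set.Ioi (0:ℝ), scK 0 u * (scF (t - u) - scF (t + u)))) := by
  apply tendsto_integral_filter_of_dominated_convergence scD
  · filter_upwards [self_mem_nhdsWithin] with ε hε
    exact ((scK_cont (ne_of_gt hε)).mul (scF_diff_cont t)).aestronglyMeasurable
  · filter_upwards [self_mem_nhdsWithin] with ε hε
    exact (ae_restrict_iff' measurableSet_Ioi).2 (ae_of_all _ fun u hu => key_bound ht ε hu)
  · exact scD_integrable
  · refine (ae_restrict_iff' measurableSet_Ioi).2 (ae_of_all _ ?_)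
    intro u hu
    exact (scK_tendsto (ne_of_gt hu)).mul_const _

lemma sym_bound {t : ℝ} (ht : |t| ≤ 2) (ε : ℝ) :
    |∫ u in Set.Ioi (0:ℝ), scK ε u * (scF (t - u) - scF (t + u))|
      ≤ ∫ u in Set.Ioi (0:ℝ), scD u := by
  rw [← Real.norm_eq_abs]
  exact norm_integral_le_of_norm_le scD_integrable
    ((ae_restrict_iff' measurableSet_Ioi).2 (ae_of_all _ fun u hu => key_bound ht ε hu))

/-- Dominating function near the point mass. -/
noncomputable def bndA (a : ℝ) : ℝ → ℝ :=
  Set.indicator (Set.Icc (-2:ℝ) 2) (fun _ => (1 / Real.pi) * (|a| - 2)⁻¹)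

lemma bndA_integrable (a : ℝ) : Integrable (bndA a) :=
  (integrable_indicator_iff measurableSet_Icc).2
    (integrableOn_const measure_Icc_lt_top.ne)

lemma bndA_bound {a : ℝ} (ha : 2 < |a|) (ε : ℝ) (s : ℝ) :
    ‖scF s * scK ε (a - s)‖ ≤ bndA a s := by
  by_cases hmem : s ∈ Set.Icc (-2:ℝ) 2
  · rw [bndA, Set.indicator_of_mem hmem, Real.norm_eq_abs, abs_mul]
    have hs : |s| ≤ 2 := abs_le.2 ⟨hmem.1, hmem.2⟩
    have hne : a - s ≠ 0 := by
      intro h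
      rw [sub_eq_zero] at h
      rw [h] at ha
      linarith
    have h1 : |a| - 2 ≤ |a - s| := by
      have := abs_sub_abs_le_abs_sub a s
      linarith
    apply mul_le_mul (by rw [abs_of_nonneg (scF_nonneg _)]; exact scF_le _)
      ?_ (abs_nonneg _) (by positivity)
    calc |scK ε (a - s)| ≤ 1 / |a - s| := scK_abs_le' ε hne
      _ ≤ (|a| - 2)⁻¹ := by
          rw [one_div]
          exact inv_anti₀ (by linarith) h1
  · rw [bndA, Set.indicator_of_notMem hmem]
    rw [scF_eq_zero ?_, zero_mul, norm_zero]
    rw [Set.mem_Icc, not_and_or, not_le, not_le] at hmem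
    rcases hmem with h | h
    · rw [abs_of_nonpos (by linarith)]; linarith
    · rw [abs_of_nonneg (by linarith)]; linarith

lemma tendsto_at_a {a : ℝ} (ha : 2 < |a|) :
    Filter.Tendsto (fun ε : ℝ => ∫ s, scF s * scK ε (a - s))
      (𝓝[>] 0) (𝓝 (∫ s, scF s * scK 0 (a - s))) := by
  apply tendsto_integral_filter_of_dominated_convergence (bndA a)
  · filter_upwards [self_mem_nhdsWithin] with ε hε
    exact (scF_cont.mul ((scK_cont (ne_of_gt hε)).comp
      (continuous_const.sub continuous_id))).aestronglyMeasurable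
  · filter_upwards [self_mem_nhdsWithin] with ε hε
    exact ae_of_all _ (bndA_bound ha ε)
  · exact bndA_integrable a
  · have hae : ∀ᵐ s : ℝ, s ≠ a := by
      refine ae_iff.2 ?_
      simpa [Set.setOf_eq_eq_singleton] using measure_singleton (α := ℝ) a
    filter_upwards [hae] with s hs
    exact Filter.Tendsto.const_mul _ (scK_tendsto (sub_ne_zero.2 (Ne.symm hs)))

lemma at_a_bound {a : ℝ} (ha : 2 < |a|) (ε : ℝ) :
    |∫ s, scF s * scK ε (a - s)| ≤ ∫ s, bndA a s := by
  rw [← Real.norm_eq_abs]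
  exact norm_integral_le_of_norm_le (bndA_integrable a) (ae_of_all _ (bndA_bound ha ε))

lemma Hlim_meas : Measurable (fun t : ℝ =>
    ∫ u in Set.Ioi (0:ℝ), scK 0 u * (scF (t - u) - scF (t + u))) := by
  have hsm : StronglyMeasurable (fun p : ℝ × ℝ =>
      scK 0 p.2 * (scF (p.1 - p.2) - scF (p.1 + p.2))) := by
    apply Measurable.stronglyMeasurable
    apply Measurable.mul
    · exact measurable_snd.div (((measurable_snd.pow_const 2).add_const _))
    · exact ((scF_cont.comp (continuous_fst.sub continuous_snd)).sub
        (scF_cont.comp (continuous_fst.add continuous_snd))).measurable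
  exact hsm.integral_prod_right'.measurable

lemma G_meas {ν : Measure ℝ} [SFinite ν] {ε : ℝ} (hε : ε ≠ 0) :
    Measurable (fun t : ℝ => ∫ s, scK ε (t - s) ∂ν) := by
  have hsm : StronglyMeasurable (fun p : ℝ × ℝ => scK ε (p.1 - p.2)) :=
    ((scK_cont hε).comp (continuous_fst.sub continuous_snd)).stronglyMeasurable
  exact hsm.integral_prod_right'.measurable

lemma integrable_bounded {ν : Measure ℝ} [IsFiniteMeasure ν] {f : ℝ → ℝ}
    (hm : AEStronglyMeasurable f ν) {C : ℝ} (h : ∀ x, ‖f x‖ ≤ C) : Integrable f ν :=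
  Integrable.mono' (integrable_const C) hm (ae_of_all _ h)

lemma G_eq {a : ℝ} {σ μ : Measure ℝ} [IsFiniteMeasure σ]
    (hμ : μ = (1/2 : ℝ≥0∞) • σ + (1/2 : ℝ≥0∞) • Measure.dirac a)
    {ε : ℝ} (hε : ε ≠ 0) (t : ℝ) :
    (2 * ∫ s, (t - s) / ((t - s) ^ 2 + ε ^ 2) ∂μ)
      = (∫ s, scK ε (t - s) ∂σ) + scK ε (t - a) := by
  have hcont : Continuous (fun s : ℝ => scK ε (t - s)) :=
    (scK_cont hε).comp (continuous_const.sub continuous_id)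
  have hb : ∀ s : ℝ, ‖scK ε (t - s)‖ ≤ 1 / (2 * |ε|) := fun s => by
    rw [Real.norm_eq_abs]; exact scK_abs_le hε _
  have h1 : Integrable (fun s => scK ε (t - s)) σ :=
    integrable_bounded hcont.aestronglyMeasurable hb
  have h2 : Integrable (fun s => scK ε (t - s)) (Measure.dirac a) :=
    integrable_bounded hcont.aestronglyMeasurable hb
  have hrw : (fun s : ℝ => (t - s) / ((t - s) ^ 2 + ε ^ 2)) = fun s => scK ε (t - s) := rfl
  rw [hμ, hrw, integral_add_measure (h1.smul_measure (by norm_num))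
      (h2.smul_measure (by norm_num)),
    integral_smul_measure, integral_smul_measure, integral_dirac,
    show ((1:ℝ≥0∞)/2).toReal = (1/2 : ℝ) by
      rw [ENNReal.toReal_div]; norm_num]
  rw [smul_eq_mul, smul_eq_mul]
  ring

/- Example B.4: for `μ = ½σ + ½δ_a` with `σ` the standard semicircle law and `|a| > 2`,
the functions `g_ε(t) = 2∫ (t−s)/((t−s)²+ε²) dμ(s)` converge in `L²(μ)` as `ε → 0⁺`. -/
theorem stmt_15 (a : ℝ) (ha : 2 < |a|) (σ μ : Measure ℝ)
    (hσ : σ = volume.withDensity fun t =>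
      ENNReal.ofReal (Set.indicator (Set.Icc (-2:ℝ) 2)
        (fun t => Real.sqrt (4 - t ^ 2) / (2 * Real.pi)) t))
    (hμ : μ = (1/2 : ℝ≥0∞) • σ + (1/2 : ℝ≥0∞) • Measure.dirac a) :
    ∃ g : ℝ → ℝ, MemLp g 2 μ ∧
      Filter.Tendsto (fun ε : ℝ =>
          eLpNorm (fun t => (2 * ∫ s, (t - s) / ((t - s) ^ 2 + ε ^ 2) ∂μ) - g t) 2 μ)
        (nhdsWithin 0 (Set.Ioi 0)) (nhds 0) := by
  have hfinσ : IsFiniteMeasure σ := sigma_finite' hσ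
  have hfinμ : IsFiniteMeasure μ := by
    constructor
    rw [hμ]
    simp only [Measure.add_apply, Measure.smul_apply, smul_eq_mul]
    exact ENNReal.add_lt_top.2
      ⟨ENNReal.mul_lt_top (by norm_num) (measure_lt_top σ _),
       ENNReal.mul_lt_top (by norm_num) (measure_lt_top (Measure.dirac a) _)⟩
  -- constants
  set C1 : ℝ := ∫ u in Set.Ioi (0:ℝ), scD u with hC1
  set C2 : ℝ := ∫ s, bndA a s with hC2
  have haInv : (0:ℝ) < |a| - 2 := by linarith
  set C0 : ℝ := max C1 C2 + (|a| - 2)⁻¹ with hC0def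
  -- the limit function
  set g : ℝ → ℝ := fun t =>
    (if |t| ≤ 2 then ∫ u in Set.Ioi (0:ℝ), scK 0 u * (scF (t - u) - scF (t + u))
     else ∫ s, scF s * scK 0 (a - s)) + scK 0 (t - a) with hgdef
  have hmg : Measurable g := by
    apply Measurable.add
    · exact Measurable.ite (measurableSet_le (by fun_prop) measurable_const)
        Hlim_meas measurable_const
    · exact (measurable_id.sub_const a).div
        ((((measurable_id.sub_const a).pow_const 2).add_const _))
  -- almost every point is in the good set
  have hEμ : ∀ᵐ t ∂μ, t ∈ Set.Icc (-2:ℝ) 2 ∨ t = a := by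
    rw [hμ, ae_add_measure_iff]
    constructor
    · exact Measure.ae_smul_measure ((sigma_Icc_ae hσ).mono fun t ht => Or.inl ht) _
    · apply Measure.ae_smul_measure _ ((1:ℝ≥0∞)/2)
      rw [Filter.Eventually, MeasureTheory.ae_dirac_eq]
      exact Or.inr rfl
  -- bounds on g and on the approximants
  have hXbound : ∀ t : ℝ, (t ∈ Set.Icc (-2:ℝ) 2 ∨ t = a) → ∀ ε : ℝ, ε ≠ 0 →
      |∫ s, scK ε (t - s) ∂σ| ≤ max C1 C2 := by
    intro t htE ε hε
    rcases htE with hIcc | rfl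
    · rw [sigma_int hσ, rep t hε]
      exact le_trans (sym_bound (abs_le.2 ⟨hIcc.1, hIcc.2⟩) ε) (le_max_left _ _)
    · rw [sigma_int hσ]
      exact le_trans (at_a_bound ha ε) (le_max_right _ _)
  have hYbound : ∀ t : ℝ, (t ∈ Set.Icc (-2:ℝ) 2 ∨ t = a) → ∀ ε : ℝ,
      |scK ε (t - a)| ≤ (|a| - 2)⁻¹ := by
    intro t htE ε
    rcases htE with hIcc | rfl
    · have ht2 : |t| ≤ 2 := abs_le.2 ⟨hIcc.1, hIcc.2⟩
      have hne : t - a ≠ 0 := by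
        intro h; rw [sub_eq_zero] at h; rw [← h] at ha; linarith
      have h1 : |a| - 2 ≤ |t - a| := by
        have := abs_sub_abs_le_abs_sub a t
        rw [abs_sub_comm a t] at this
        linarith
      calc |scK ε (t - a)| ≤ 1 / |t - a| := scK_abs_le' ε hne
        _ ≤ (|a| - 2)⁻¹ := by
            rw [one_div]; exact inv_anti₀ haInv h1
    · rw [sub_self]
      have : scK ε 0 = 0 := by simp [scK]
      rw [this, abs_zero]
      positivity
  have hgb : ∀ t : ℝ, (t ∈ Set.Icc (-2:ℝ) 2 ∨ t = a) → |g t| ≤ C0 := by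
    intro t htE
    have hY := hYbound t htE 0
    have hX : |if |t| ≤ 2 then ∫ u in Set.Ioi (0:ℝ), scK 0 u * (scF (t - u) - scF (t + u))
        else ∫ s, scF s * scK 0 (a - s)| ≤ max C1 C2 := by
      by_cases h2 : |t| ≤ 2
      · rw [if_pos h2]
        exact le_trans (sym_bound h2 0) (le_max_left _ _)
      · rw [if_neg h2]
        exact le_trans (at_a_bound ha 0) (le_max_right _ _)
    calc |g t| ≤ |if |t| ≤ 2 then ∫ u in Set.Ioi (0:ℝ), scK 0 u * (scF (t - u) - scF (t + u))
        else ∫ s, scF s * scK 0 (a - s)| + |scK 0 (t - a)| := abs_add_le _ _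
      _ ≤ C0 := by rw [hC0def]; exact add_le_add hX hY
  -- pointwise convergence of the approximants to `g`
  have hptw : ∀ᵐ t ∂μ, Filter.Tendsto
      (fun ε : ℝ => (2 * ∫ s, (t - s) / ((t - s) ^ 2 + ε ^ 2) ∂μ) - g t)
      (𝓝[>] 0) (𝓝 0) := by
    filter_upwards [hEμ] with t htE
    have hconv : Filter.Tendsto (fun ε : ℝ => 2 * ∫ s, (t - s) / ((t - s) ^ 2 + ε ^ 2) ∂μ)
        (𝓝[>] 0) (𝓝 (g t)) := by
      have hsplit : (fun ε : ℝ => (∫ s, scK ε (t - s) ∂σ) + scK ε (t - a))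
          =ᶠ[𝓝[>] 0] (fun ε : ℝ => 2 * ∫ s, (t - s) / ((t - s) ^ 2 + ε ^ 2) ∂μ) := by
        filter_upwards [self_mem_nhdsWithin] with ε hε
        exact (G_eq hμ (ne_of_gt hε) t).symm
      apply Filter.Tendsto.congr' hsplit
      rcases htE with hIcc | hEqa
      · have ht2 : |t| ≤ 2 := abs_le.2 ⟨hIcc.1, hIcc.2⟩
        have hta : t ≠ a := fun h => by rw [h] at ht2; linarith
        have hσt : Filter.Tendsto (fun ε : ℝ => ∫ s, scK ε (t - s) ∂σ) (𝓝[>] 0)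
            (𝓝 (∫ u in Set.Ioi (0:ℝ), scK 0 u * (scF (t - u) - scF (t + u)))) := by
          apply Filter.Tendsto.congr' _ (tendsto_sym ht2)
          filter_upwards [self_mem_nhdsWithin] with ε hε
          rw [sigma_int hσ, rep t (ne_of_gt hε)]
        have hda : Filter.Tendsto (fun ε : ℝ => scK ε (t - a)) (𝓝[>] 0)
            (𝓝 (scK 0 (t - a))) := scK_tendsto (sub_ne_zero.2 hta)
        have hsum := hσt.add hda
        have hgt : g t = (∫ u in Set.Ioi (0:ℝ), scK 0 u * (scF (t - u) - scF (t + u)))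
            + scK 0 (t - a) := by
          rw [hgdef]; simp only [if_pos ht2]
        rw [hgt]
        exact hsum
      · subst hEqa
        have h2a : ¬ |t| ≤ 2 := not_le.2 ha
        have hσa : Filter.Tendsto (fun ε : ℝ => ∫ s, scK ε (t - s) ∂σ) (𝓝[>] 0)
            (𝓝 (∫ s, scF s * scK 0 (t - s))) := by
          apply Filter.Tendsto.congr' _ (tendsto_at_a ha)
          filter_upwards with ε
          rw [sigma_int hσ]
        have hda : Filter.Tendsto (fun ε : ℝ => scK ε (t - t)) (𝓝[>] 0)
            (𝓝 (scK 0 (t - t))) := by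
          have hz : ∀ ε : ℝ, scK ε (t - t) = 0 := fun ε => by simp [scK]
          simp only [hz]
          exact tendsto_const_nhds
        have hsum := hσa.add hda
        have hgt : g t = (∫ s, scF s * scK 0 (t - s)) + scK 0 (t - t) := by
          rw [hgdef]; simp only [if_neg h2a]
        rw [hgt]
        exact hsum
    have := hconv.sub_const (g t)
    rwa [sub_self] at this
  refine ⟨g, ?_, ?_⟩
  · refine MemLp.of_bound hmg.aestronglyMeasurable C0 ?_
    filter_upwards [hEμ] with t htE
    rw [Real.norm_eq_abs]
    exact hgb t htE
  · have heq : ∀ ε : ℝ,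
        eLpNorm (fun t => (2 * ∫ s, (t - s) / ((t - s) ^ 2 + ε ^ 2) ∂μ) - g t) 2 μ
          = (∫⁻ t, ((‖(2 * ∫ s, (t - s) / ((t - s) ^ 2 + ε ^ 2) ∂μ) - g t‖₊ : ℝ≥0∞)) ^ (2:ℝ)
              ∂μ) ^ (1/2 : ℝ) := by
      intro ε
      rw [eLpNorm_eq_lintegral_rpow_enorm_toReal two_ne_zero ENNReal.ofNat_ne_top]
      norm_num
      rfl
    simp only [heq]
    have hlim0 : Filter.Tendsto (fun ε : ℝ =>
        ∫⁻ t, ((‖(2 * ∫ s, (t - s) / ((t - s) ^ 2 + ε ^ 2) ∂μ) - g t‖₊ : ℝ≥0∞)) ^ (2:ℝ) ∂μ)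
        (𝓝[>] 0) (𝓝 0) := by
      have hdct := tendsto_lintegral_filter_of_dominated_convergence
        (μ := μ) (l := 𝓝[>] (0:ℝ))
        (F := fun (ε : ℝ) (t : ℝ) =>
          ((‖(2 * ∫ s, (t - s) / ((t - s) ^ 2 + ε ^ 2) ∂μ) - g t‖₊ : ℝ≥0∞)) ^ (2:ℝ))
        (f := fun _ => (0:ℝ≥0∞))
        (fun _ => (ENNReal.ofReal (2 * C0)) ^ (2:ℝ)) ?_ ?_ ?_ ?_
      · simpa using hdct
      · filter_upwards [self_mem_nhdsWithin] with ε hε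
        have h2 : Measurable (fun t : ℝ => ∫ s, scK ε (t - s) ∂μ) := G_meas (ne_of_gt hε)
        have h1 : Measurable (fun t : ℝ => 2 * ∫ s, (t - s) / ((t - s) ^ 2 + ε ^ 2) ∂μ) :=
          measurable_const.mul h2
        exact (((h1.sub hmg).nnnorm).coe_nnreal_ennreal).pow measurable_const
      · filter_upwards [self_mem_nhdsWithin] with ε hε
        filter_upwards [hEμ] with t htE
        have hnorm : ‖(2 * ∫ s, (t - s) / ((t - s) ^ 2 + ε ^ 2) ∂μ) - g t‖ ≤ 2 * C0 := by
          rw [G_eq hμ (ne_of_gt hε) t]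
          have hX := hXbound t htE ε (ne_of_gt hε)
          have hY := hYbound t htE ε
          have hg2 := hgb t htE
          have hGa : ‖(∫ s, scK ε (t - s) ∂σ) + scK ε (t - a)‖ ≤ C0 := by
            rw [Real.norm_eq_abs]
            calc |(∫ s, scK ε (t - s) ∂σ) + scK ε (t - a)|
                ≤ |∫ s, scK ε (t - s) ∂σ| + |scK ε (t - a)| := abs_add_le _ _
              _ ≤ C0 := by rw [hC0def]; exact add_le_add hX hY
          calc ‖(∫ s, scK ε (t - s) ∂σ) + scK ε (t - a) - g t‖
              ≤ ‖(∫ s, scK ε (t - s) ∂σ) + scK ε (t - a)‖ + ‖g t‖ := norm_sub_le _ _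
            _ ≤ C0 + C0 := add_le_add hGa (by rw [Real.norm_eq_abs]; exact hg2)
            _ = 2 * C0 := by ring
        calc ((‖(2 * ∫ s, (t - s) / ((t - s) ^ 2 + ε ^ 2) ∂μ) - g t‖₊ : ℝ≥0∞)) ^ (2:ℝ)
            = (ENNReal.ofReal ‖(2 * ∫ s, (t - s) / ((t - s) ^ 2 + ε ^ 2) ∂μ) - g t‖) ^ (2:ℝ) := by
              rw [ofReal_norm, enorm_eq_nnnorm]
          _ ≤ (ENNReal.ofReal (2 * C0)) ^ (2:ℝ) :=
              ENNReal.rpow_le_rpow (ENNReal.ofReal_le_ofReal hnorm) (by norm_num)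
      · rw [lintegral_const]
        exact ENNReal.mul_ne_top
          (ENNReal.rpow_ne_top_of_nonneg (by norm_num) ENNReal.ofReal_ne_top)
          (measure_ne_top μ _)
      · filter_upwards [hptw] with t hconv
        have hcont : Continuous (fun x : ℝ => ((‖x‖₊ : ℝ≥0∞)) ^ (2:ℝ)) :=
          ENNReal.continuous_rpow_const.comp
            (ENNReal.continuous_coe_iff.2 continuous_nnnorm)
        have hcomp := (hcont.tendsto 0).comp hconv
        have h00 : ((‖(0:ℝ)‖₊ : ℝ≥0∞)) ^ (2:ℝ) = 0 := by
          rw [nnnorm_zero, ENNReal.coe_zero, ENNReal.zero_rpow_of_pos (by norm_num)]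
        rw [h00] at hcomp
        exact hcomp
    have hfinal := ((ENNReal.continuous_rpow_const (y := (1/2:ℝ))).tendsto 0).comp hlim0
    have h0half : (0:ℝ≥0∞) ^ (1/2:ℝ) = 0 := ENNReal.zero_rpow_of_pos (by norm_num)
    simp only [Function.comp_def, h0half] at hfinal
    exact hfinal
end

section
/- Let M be a von Neumann algebra acting on L²(M), identify L²(M⊗̄M°) with the Hilbert–Schmidt operators HS(L²(M)), and let y₀ ∈ M be a diffuse element (its spectral measure has no atoms). If η ∈ HS(L²(M)) satisfies y₀ η = η y₀, then η = 0. -/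
open scoped ComplexConjugate
open Filter Metric Set
open scoped Pointwise

private lemma aux_compact_findim {H V : Type*} [NormedAddCommGroup H] [NormedSpace ℂ H]
    [NormedAddCommGroup V] [NormedSpace ℂ V] [FiniteDimensional ℂ V] (g : H →L[ℂ] V) :
    IsCompactOperator g := by
  refine ⟨Metric.closedBall 0 ‖g‖, isCompact_closedBall _ _, ?_⟩
  refine Filter.mem_of_superset (Metric.closedBall_mem_nhds (0 : H) one_pos) fun x hx => ?_
  simp only [Metric.mem_closedBall, dist_zero_right] at hx
  simp only [Set.mem_preimage, Metric.mem_closedBall, dist_zero_right]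
  calc ‖g x‖ ≤ ‖g‖ * ‖x‖ := g.le_opNorm x
    _ ≤ ‖g‖ * 1 := by gcongr
    _ = ‖g‖ := mul_one _

private lemma aux_hs_compact {H : Type*} [NormedAddCommGroup H] [InnerProductSpace ℂ H]
    [CompleteSpace H] {ι : Type*} (b : HilbertBasis ι ℂ H) (η : H →L[ℂ] H)
    (hHS : Summable fun i => ‖η (b i)‖ ^ 2) : IsCompactOperator η := by
  classical
  -- finite-dimensional truncations
  set V : Finset ι → Submodule ℂ H := fun F => Submodule.span ℂ ((F.image fun i => b i : Finset H) : Set H) with hV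
  have hVfd : ∀ F, FiniteDimensional ℂ (V F) := fun F => FiniteDimensional.span_finset ℂ _
  have hVproj : ∀ F, Submodule.HasOrthogonalProjection (V F) := fun F => by
    haveI := hVfd F; infer_instance
  -- the truncated operators
  set Φ : Finset ι → (H →L[ℂ] H) := fun F =>
    haveI := hVproj F
    η ∘L ((V F).subtypeL ∘L Submodule.orthogonalProjectionOnto (V F)) with hΦ
  -- the tails
  set tail : Finset ι → ℝ := fun F => ∑' i, Set.indicator {i | i ∉ F} (fun i => ‖η (b i)‖ ^ 2) i with htail
  have htail0 : ∀ F, 0 ≤ tail F := fun F =>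
    tsum_nonneg fun i => Set.indicator_nonneg (fun i _ => sq_nonneg _) i
  -- key bound for vectors orthogonal to the basis vectors in F
  have hkey : ∀ (F : Finset ι) (w : H), (∀ i ∈ F, (inner ℂ (b i) w : ℂ) = 0) →
      ‖η w‖ ≤ ‖w‖ * Real.sqrt (tail F) := by
    intro F w hw
    have hsum : HasSum (fun i => (b.repr w i : ℂ) • η (b i)) (η w) := by
      have := (b.hasSum_repr w).mapL η
      simpa using this
    have hb : ∀ (s : Finset ι), ‖∑ i ∈ s, (b.repr w i : ℂ) • η (b i)‖ ≤ ‖w‖ * Real.sqrt (tail F) := by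
      intro s
      have h1 : ‖∑ i ∈ s, (b.repr w i : ℂ) • η (b i)‖ ≤
          ∑ i ∈ s, ‖(b.repr w i : ℂ)‖ * Set.indicator {i | i ∉ F} (fun i => ‖η (b i)‖) i := by
        refine (norm_sum_le _ _).trans (Finset.sum_le_sum fun i _ => ?_)
        rw [norm_smul]
        by_cases hiF : i ∈ F
        · have : (b.repr w i : ℂ) = 0 := by
            rw [b.repr_apply_apply]; exact hw i hiF
          simp [this]
        · rw [Set.indicator_of_mem (by simpa using hiF)]
      have h2 : ∑ i ∈ s, ‖(b.repr w i : ℂ)‖ * Set.indicator {i | i ∉ F} (fun i => ‖η (b i)‖) i ≤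
          Real.sqrt (∑ i ∈ s, ‖(b.repr w i : ℂ)‖ ^ 2) *
          Real.sqrt (∑ i ∈ s, (Set.indicator {i | i ∉ F} (fun i => ‖η (b i)‖) i) ^ 2) :=
        Real.sum_mul_le_sqrt_mul_sqrt s _ _
      have h3 : Real.sqrt (∑ i ∈ s, ‖(b.repr w i : ℂ)‖ ^ 2) ≤ ‖w‖ := by
        refine Real.sqrt_le_sqrt ?_ |>.trans (le_of_eq (Real.sqrt_sq (norm_nonneg w))) |>.trans le_rfl
        · -- ∑ ≤ ‖w‖ ^2
          have := b.orthonormal.sum_inner_products_le w (s := s)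
          calc ∑ i ∈ s, ‖(b.repr w i : ℂ)‖ ^ 2 = ∑ i ∈ s, ‖(inner ℂ (b i) w : ℂ)‖ ^ 2 := by
                refine Finset.sum_congr rfl fun i _ => by rw [b.repr_apply_apply]
            _ ≤ ‖w‖ ^ 2 := this
      have h4 : Real.sqrt (∑ i ∈ s, (Set.indicator {i | i ∉ F} (fun i => ‖η (b i)‖) i) ^ 2) ≤
          Real.sqrt (tail F) := by
        refine Real.sqrt_le_sqrt ?_
        have heq : ∀ i, (Set.indicator {i | i ∉ F} (fun i => ‖η (b i)‖) i) ^ 2 =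
            Set.indicator {i | i ∉ F} (fun i => ‖η (b i)‖ ^ 2) i := by
          intro i
          by_cases hiF : i ∈ F
          · simp [Set.indicator_of_notMem, hiF]
          · simp [Set.indicator_of_mem, hiF]
        rw [htail]
        calc ∑ i ∈ s, (Set.indicator {i | i ∉ F} (fun i => ‖η (b i)‖) i) ^ 2
            = ∑ i ∈ s, Set.indicator {i | i ∉ F} (fun i => ‖η (b i)‖ ^ 2) i :=
              Finset.sum_congr rfl fun i _ => heq i
          _ ≤ _ := Summable.sum_le_tsum s (fun i _ => Set.indicator_nonneg (fun i _ => sq_nonneg _) i)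
              (hHS.indicator _)
      calc ‖∑ i ∈ s, (b.repr w i : ℂ) • η (b i)‖ ≤ _ := h1
        _ ≤ _ := h2
        _ ≤ ‖w‖ * Real.sqrt (tail F) := by
            exact mul_le_mul h3 h4 (Real.sqrt_nonneg _) (norm_nonneg w)
    have htends : Tendsto (fun s : Finset ι => ‖∑ i ∈ s, (b.repr w i : ℂ) • η (b i)‖)
        atTop (nhds ‖η w‖) := (continuous_norm.tendsto _).comp hsum
    exact le_of_tendsto htends (Filter.Eventually.of_forall hb)
  -- operator norm bound for η - Φ F
  have hbound : ∀ F, ‖η - Φ F‖ ≤ Real.sqrt (tail F) := by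
    intro F
    haveI := hVproj F
    refine ContinuousLinearMap.opNorm_le_bound _ (Real.sqrt_nonneg _) fun z => ?_
    have hw : (η - Φ F) z = η (z - ((Submodule.orthogonalProjectionOnto (V F)) z : H)) := by
      simp [hΦ, map_sub]
    set w := z - ((Submodule.orthogonalProjectionOnto (V F)) z : H) with hwdef
    have hworth : w ∈ (V F)ᗮ := (V F).sub_starProjection_mem_orthogonal z
    have hwin : ∀ i ∈ F, (inner ℂ (b i) w : ℂ) = 0 := by
      intro i hi
      exact ((Submodule.mem_orthogonal _ _).1 hworth) (b i)
        (Submodule.subset_span (Finset.mem_coe.2 (Finset.mem_image_of_mem _ hi)))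
    have hnw : ‖w‖ ≤ ‖z‖ := by
      rw [hwdef, Submodule.coe_orthogonalProjectionOnto_apply, ← Submodule.starProjection_orthogonal_val,
        ← Submodule.coe_orthogonalProjectionOnto_apply]
      calc ‖((Submodule.orthogonalProjectionOnto (V F)ᗮ) z : H)‖
          = ‖(Submodule.orthogonalProjectionOnto (V F)ᗮ) z‖ := (Submodule.coe_norm _).symm
        _ ≤ ‖Submodule.orthogonalProjectionOnto (V F)ᗮ‖ * ‖z‖ := ContinuousLinearMap.le_opNorm _ _
        _ ≤ 1 * ‖z‖ := by gcongr; exact Submodule.orthogonalProjectionOnto_norm_le _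
        _ = ‖z‖ := one_mul _
    calc ‖(η - Φ F) z‖ = ‖η w‖ := by rw [hw]
      _ ≤ ‖w‖ * Real.sqrt (tail F) := hkey F w hwin
      _ ≤ ‖z‖ * Real.sqrt (tail F) := by gcongr
      _ = Real.sqrt (tail F) * ‖z‖ := mul_comm _ _
  have htt : Tendsto tail atTop (nhds 0) := by
    have h := tendsto_tsum_compl_atTop_zero (fun i => ‖η (b i)‖ ^ 2)
    have heq : (fun s : Finset ι => ∑' (a : { x // x ∉ s }), ‖η (b a)‖ ^ 2) = tail := by
      funext F
      rw [htail]
      exact tsum_subtype {i | i ∉ F} fun i => ‖η (b i)‖ ^ 2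
    rwa [heq] at h
  have hsqrt : Tendsto (fun F => Real.sqrt (tail F)) atTop (nhds 0) := by
    have h0 : Tendsto Real.sqrt (nhds 0) (nhds 0) := by
      simpa using (Real.continuous_sqrt.tendsto 0)
    exact h0.comp htt
  have htendsΦ : Tendsto Φ atTop (nhds η) := by
    rw [tendsto_iff_norm_sub_tendsto_zero]
    refine squeeze_zero (fun F => norm_nonneg _) (fun F => ?_) hsqrt
    rw [norm_sub_rev]
    exact hbound F
  refine isCompactOperator_of_tendsto htendsΦ (Filter.Eventually.of_forall fun F => ?_)
  haveI := hVfd F; haveI := hVproj F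
  have h1 : IsCompactOperator (Submodule.orthogonalProjectionOnto (V F)) := aux_compact_findim _
  have h2 := h1.continuous_comp ((V F).subtypeL.continuous)
  have h3 := h2.continuous_comp η.continuous
  have : (⇑η ∘ ⇑(V F).subtypeL ∘ ⇑(Submodule.orthogonalProjectionOnto (V F))) = ⇑(Φ F) := by
    funext z; simp [hΦ]
  rw [← this]
  exact h3

/- A Hilbert–Schmidt operator commuting with a diffuse self-adjoint operator vanishes.
Diffuseness (the spectral measure of `y₀` has no atoms) is expressed by `y₀` having no
eigenvectors; Hilbert–Schmidt is expressed by square-summability of `‖η (b i)‖` over a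
Hilbert basis `b`. -/
theorem stmt_19 {H : Type*} [NormedAddCommGroup H] [InnerProductSpace ℂ H] [CompleteSpace H]
    {ι : Type*} (b : HilbertBasis ι ℂ H)
    (y₀ : H →L[ℂ] H) (hy : IsSelfAdjoint y₀)
    (hdiffuse : ∀ (c : ℂ) (v : H), y₀ v = c • v → v = 0)
    (η : H →L[ℂ] H) (hHS : Summable fun i => ‖η (b i)‖ ^ 2)
    (hcomm : y₀ ∘L η = η ∘L y₀) :
    η = 0 := by
  classical
  by_contra hne
  have hηc : IsCompactOperator η := aux_hs_compact b η hHS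
  have hηpos : 0 < ‖η‖ :=
    lt_of_le_of_ne (norm_nonneg η) (fun h => hne ((ContinuousLinearMap.opNorm_zero_iff η).1 h.symm))
  set T : H →L[ℂ] H := ContinuousLinearMap.adjoint η ∘L η with hT
  set μ : ℝ := ‖η‖ * ‖η‖ with hμ
  have hμpos : 0 < μ := mul_pos hηpos hηpos
  have hμc : ((μ : ℂ)) ≠ 0 := by exact_mod_cast hμpos.ne'
  have hTnorm : ‖T‖ = μ := ContinuousLinearMap.norm_adjoint_comp_self η
  -- T commutes with y₀
  have hadj : y₀ ∘L ContinuousLinearMap.adjoint η = ContinuousLinearMap.adjoint η ∘L y₀ := by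
    have h := congrArg ContinuousLinearMap.adjoint hcomm
    rw [ContinuousLinearMap.adjoint_comp, ContinuousLinearMap.adjoint_comp, hy.adjoint_eq] at h
    exact h.symm
  have hTy : ∀ x, T (y₀ x) = y₀ (T x) := by
    intro x
    have h1 : y₀ ((ContinuousLinearMap.adjoint η) (η x)) =
        (ContinuousLinearMap.adjoint η) (y₀ (η x)) :=
      congrFun (congrArg DFunLike.coe hadj) (η x)
    have h2 : y₀ (η x) = η (y₀ x) := congrFun (congrArg DFunLike.coe hcomm) x
    simp only [hT, ContinuousLinearMap.comp_apply]
    rw [← h2, ← h1]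
  -- Rayleigh quotient identity
  have hray : ∀ x : H, RCLike.re (inner ℂ (T x) x : ℂ) = ‖η x‖ ^ 2 := by
    intro x
    have : (inner ℂ (T x) x : ℂ) = inner ℂ (η x) (η x) := by
      simp only [hT, ContinuousLinearMap.comp_apply]
      exact ContinuousLinearMap.adjoint_inner_left η x (η x)
    rw [this, inner_self_eq_norm_sq_to_K]
    simp [← Complex.ofReal_pow]
  -- compactness of T
  have hTc : IsCompactOperator T := by
    have h := hηc.continuous_comp (ContinuousLinearMap.adjoint η).continuous
    have : (⇑(ContinuousLinearMap.adjoint η) ∘ ⇑η) = ⇑T := by funext z; simp [hT]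
    rwa [this] at h
  -- choose almost-maximizing sequence
  have hseq : ∀ n : ℕ, ∃ x : H, ‖x‖ < 1 ∧ ‖η‖ - 1 / (n + 1) < ‖η x‖ := by
    intro n
    exact η.exists_lt_apply_of_lt_opNorm (by
      have : (0:ℝ) < 1 / (n + 1) := by positivity
      linarith)
  choose x hx1 hx2 using hseq
  have hxball : ∀ n, x n ∈ Metric.closedBall (0 : H) 1 := fun n => by
    simpa [Metric.mem_closedBall, dist_zero_right] using (hx1 n).le
  have hηx : Tendsto (fun n => ‖η (x n)‖) atTop (nhds ‖η‖) := by
    have hlb : Tendsto (fun n : ℕ => ‖η‖ - 1 / (n + 1)) atTop (nhds ‖η‖) := by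
      have : Tendsto (fun n : ℕ => 1 / ((n:ℝ) + 1)) atTop (nhds 0) :=
        tendsto_one_div_add_atTop_nhds_zero_nat
      simpa using tendsto_const_nhds.sub this
    refine tendsto_of_tendsto_of_tendsto_of_le_of_le hlb tendsto_const_nhds
      (fun n => (hx2 n).le) (fun n => ?_)
    calc ‖η (x n)‖ ≤ ‖η‖ * ‖x n‖ := η.le_opNorm _
      _ ≤ ‖η‖ * 1 := by gcongr; exact (hx1 n).le
      _ = ‖η‖ := mul_one _
  have hηx2 : Tendsto (fun n => ‖η (x n)‖ ^ 2) atTop (nhds μ) := by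
    have := hηx.mul hηx
    simpa [hμ, sq] using this
  -- ‖T xₙ - μ xₙ‖ → 0
  have hd2 : ∀ n, ‖T (x n) - (μ:ℂ) • x n‖ ^ 2 ≤ 2 * μ * μ - 2 * μ * ‖η (x n)‖ ^ 2 := by
    intro n
    have hTx : ‖T (x n)‖ ≤ μ := by
      calc ‖T (x n)‖ ≤ ‖T‖ * ‖x n‖ := T.le_opNorm _
        _ ≤ ‖T‖ * 1 := by gcongr; exact (hx1 n).le
        _ = μ := by rw [mul_one, hTnorm]
    have hre : RCLike.re (inner ℂ (T (x n)) ((μ:ℂ) • x n) : ℂ) = μ * ‖η (x n)‖ ^ 2 := by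
      rw [inner_smul_right]
      have := hray (x n)
      simp only [RCLike.mul_re, Complex.ofReal_re, Complex.ofReal_im]
      rw [show RCLike.re (inner ℂ (T (x n)) (x n) : ℂ) = Complex.re (inner ℂ (T (x n)) (x n) : ℂ) from rfl] at this
      simp [this]
    have hnorm : ‖(μ:ℂ) • x n‖ ≤ μ := by
      rw [norm_smul]
      calc ‖(μ:ℂ)‖ * ‖x n‖ ≤ ‖(μ:ℂ)‖ * 1 := by gcongr; exact (hx1 n).le
        _ = μ := by simp [Complex.norm_of_nonneg hμpos.le, mul_one, abs_of_nonneg hμpos.le]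
    have := norm_sub_sq (𝕜 := ℂ) (T (x n)) ((μ:ℂ) • x n)
    rw [this, hre]
    nlinarith [sq_nonneg (‖T (x n)‖), norm_nonneg (T (x n)), norm_nonneg ((μ:ℂ) • x n),
      sq_nonneg (‖(μ:ℂ) • x n‖)]
  have hdiff0 : Tendsto (fun n => ‖T (x n) - (μ:ℂ) • x n‖) atTop (nhds 0) := by
    have hsq : Tendsto (fun n => ‖T (x n) - (μ:ℂ) • x n‖ ^ 2) atTop (nhds 0) := by
      have hub : Tendsto (fun n => 2 * μ * μ - 2 * μ * ‖η (x n)‖ ^ 2) atTop (nhds 0) := by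
        have := (tendsto_const_nhds (x := 2 * μ * μ) (f := atTop (α := ℕ))).sub
          (hηx2.const_mul (2 * μ))
        simpa [mul_assoc] using this
      exact squeeze_zero (fun n => sq_nonneg _) hd2 hub
    have : Tendsto (fun n => Real.sqrt (‖T (x n) - (μ:ℂ) • x n‖ ^ 2)) atTop (nhds 0) := by
      have h0 : Tendsto Real.sqrt (nhds 0) (nhds 0) := by
        simpa using (Real.continuous_sqrt.tendsto 0)
      exact h0.comp hsq
    simpa [Real.sqrt_sq (norm_nonneg _)] using this
  -- extract convergent subsequence of T xₙ
  obtain ⟨K, hK, hKsub⟩ := hTc.image_closedBall_subset_compact (𝕜₁ := ℂ) 1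
  have hTxK : ∀ n, T (x n) ∈ K := fun n => hKsub ⟨x n, hxball n, rfl⟩
  obtain ⟨y, _, φ, hφ, hty⟩ := hK.tendsto_subseq hTxK
  -- μ x (φ k) → y
  have hd0' : Tendsto (fun k => T (x (φ k)) - (μ:ℂ) • x (φ k)) atTop (nhds 0) :=
    tendsto_zero_iff_norm_tendsto_zero.2 (hdiff0.comp hφ.tendsto_atTop)
  have hμx : Tendsto (fun k => (μ:ℂ) • x (φ k)) atTop (nhds y) := by
    have h1 := hty.sub hd0'
    simpa using h1
  set v : H := (μ:ℂ)⁻¹ • y with hv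
  have hxv : Tendsto (fun k => x (φ k)) atTop (nhds v) :=
    (hμx.const_smul ((μ:ℂ)⁻¹)).congr
      (fun k => by rw [smul_smul, inv_mul_cancel₀ hμc, one_smul])
  -- T v = μ v
  have hTv : T v = (μ:ℂ) • v := by
    have h1 : Tendsto (fun k => T (x (φ k))) atTop (nhds (T v)) :=
      (T.continuous.tendsto v).comp hxv
    have h2 : y = (μ:ℂ) • v := by
      rw [hv, smul_smul, mul_inv_cancel₀ hμc, one_smul]
    exact tendsto_nhds_unique h1 (h2 ▸ hty)
  -- v ≠ 0
  have hηv : ‖η v‖ = ‖η‖ := by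
    have h1 : Tendsto (fun k => ‖η (x (φ k))‖) atTop (nhds ‖η v‖) :=
      (continuous_norm.tendsto _).comp ((η.continuous.tendsto v).comp hxv)
    exact tendsto_nhds_unique h1 (hηx.comp hφ.tendsto_atTop)
  have hvne : v ≠ 0 := by
    intro h
    rw [h] at hηv
    simp at hηv
    exact hηpos.ne' hηv.symm
  -- the eigenspace
  set E : Submodule ℂ H := LinearMap.ker ((T - (μ:ℂ) • (1 : H →L[ℂ] H)) : H →ₗ[ℂ] H) with hE
  have hmemE : ∀ z : H, z ∈ E ↔ T z = (μ:ℂ) • z := by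
    intro z
    rw [hE, LinearMap.mem_ker]
    constructor
    · intro h
      have h' : T z - (μ:ℂ) • z = 0 := by simpa using h
      exact sub_eq_zero.1 h'
    · intro h
      show (T - (μ:ℂ) • (1 : H →L[ℂ] H)) z = 0
      simp [ContinuousLinearMap.sub_apply, h]
  have hvE : v ∈ E := (hmemE v).2 hTv
  -- E is finite dimensional
  have hEclosed : IsClosed (E : Set H) := ContinuousLinearMap.isClosed_ker (T - (μ:ℂ) • (1 : H →L[ℂ] H))
  have hSsub : (E : Set H) ∩ Metric.closedBall 0 1 ⊆ (μ:ℂ)⁻¹ • K := by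
    rintro z ⟨hzE, hzb⟩
    refine Set.mem_smul_set.2 ⟨T z, hKsub ⟨z, hzb, rfl⟩, ?_⟩
    rw [(hmemE z).1 hzE, smul_smul, inv_mul_cancel₀ hμc, one_smul]
  have hScompact : IsCompact ((E : Set H) ∩ Metric.closedBall 0 1) :=
    (hK.smul ((μ:ℂ)⁻¹)).of_isClosed_subset (hEclosed.inter Metric.isClosed_closedBall) hSsub
  haveI hEfd : FiniteDimensional ℂ E := by
    apply FiniteDimensional.of_isCompact_closedBall₀ ℂ one_pos (V := E)
    have hemb : Topology.IsEmbedding ((↑) : E → H) := Topology.IsEmbedding.subtypeVal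
    rw [hemb.isCompact_iff]
    convert hScompact using 1
    ext z
    simp only [Set.mem_image, Metric.mem_closedBall, dist_zero_right, Set.mem_inter_iff,
      SetLike.mem_coe]
    constructor
    · rintro ⟨w, hw1, rfl⟩
      exact ⟨w.2, by simpa [Submodule.coe_norm] using hw1⟩
    · rintro ⟨hz1, hz2⟩
      exact ⟨⟨z, hz1⟩, by simpa [Submodule.coe_norm] using hz2, rfl⟩
  haveI hEnt : Nontrivial E := nontrivial_of_ne (⟨v, hvE⟩ : E) 0 (by
    intro h
    exact hvne (by simpa using congrArg Subtype.val h))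
  -- y₀ preserves E
  have hmap : ∀ z ∈ E, y₀ z ∈ E := by
    intro z hz
    rw [hmemE] at hz ⊢
    rw [hTy z, hz, map_smul]
  set f : Module.End ℂ E := (y₀ : H →ₗ[ℂ] H).restrict hmap with hf
  obtain ⟨c, hc⟩ := Module.End.exists_eigenvalue f
  obtain ⟨w, hw⟩ := hc.exists_hasEigenvector
  have happ : y₀ (w : H) = c • (w : H) := by
    have h1 := hw.apply_eq_smul
    have h2 := congrArg (Subtype.val) h1
    simpa [hf, LinearMap.restrict_apply] using h2
  have hw0 : (w : H) = 0 := hdiffuse c (w : H) happ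
  exact hw.2 (Subtype.ext hw0)
end
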